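/- arXiv:1905.07468 — 3 statements merged into one kernel-verified Lean document; each statement's English description precedes it below -/
import Mathlib

section
/- Let G = (V,E) be the directed spanner instance built from a projection games instance in which every vertex of L has degree exactly K ≥ 1, with parameter k ≥ 2, and let y' be built from y*, where the moment matrix (y*_{Ψ1∪Ψ2}), indexed by subsets Ψ1, Ψ2 ⊆ (L∪R)×Σ with |Ψ1|, |Ψ2| ≤ r+2, is positive semidefinite. Then the moment matrix M_{r+2}(y') = (y'_{I∪J}), indexed by subsets I, J ⊆ E with |I|, |J| ≤ r+2, is positive semidefinite; in particular so is M_{r+1}(y'). -/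
open Finset

/-- A directed path in the graph with edge set `E`, from `u` to `v`, given as its (nonempty)
list of edges: consecutive edges are incident, the first edge starts at `u`, the last edge ends
at `v`, and no vertex is visited twice. -/
def IsDirPath {V : Type*} [DecidableEq V] (E : Finset (V × V)) (u v : V)
    (p : List (V × V)) : Prop :=
  p ≠ [] ∧ (∀ e ∈ p, e ∈ E) ∧ Option.map Prod.fst p.head? = some u ∧
    Option.map Prod.snd p.getLast? = some v ∧
    List.Chain' (fun e f => e.2 = f.1) p ∧ (u :: p.map Prod.snd).Nodup

/-- `z ∈ Z^{u,v}` (with respect to stretch `t`): a fractional cut against the stretch-`t`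
paths from `u` to `v`, i.e. `z : E → [0,1]` with `∑_{e ∈ P} z e ≥ 1` for every path
`P ∈ 𝒫_{u,v}` (at most `t` edges). -/
def InZ {V : Type*} [DecidableEq V] (E : Finset (V × V)) (t : ℕ) (u v : V)
    (z : V × V → ℝ) : Prop :=
  (∀ e ∈ E, 0 ≤ z e ∧ z e ≤ 1) ∧
  ∀ p : List (V × V), IsDirPath E u v p → p.length ≤ t → 1 ≤ (p.map z).sum

/-- A `t`-spanner of the directed graph with edge set `E`: a subset `S ⊆ E` such that every
edge `(u,v) ∈ E` is spanned by a directed path from `u` to `v` of at most `t` edges,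
all belonging to `S`. -/
def IsSpanner {V : Type*} [DecidableEq V] (E S : Finset (V × V)) (t : ℕ) : Prop :=
  S ⊆ E ∧ ∀ e ∈ E, ∃ p : List (V × V), IsDirPath S e.1 e.2 p ∧ p.length ≤ t

/-- The moment matrix `(y_{I ∪ J})`, indexed by the subsets `I, J ⊆ E` with `|I|, |J| ≤ r`. -/
def momentMatrixE {α : Type*} [Fintype α] [DecidableEq α] (E : Finset α) (r : ℕ)
    (y : Finset α → ℝ) :
    Matrix {S : Finset α // S ⊆ E ∧ S.card ≤ r} {S : Finset α // S ⊆ E ∧ S.card ≤ r} ℝ :=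
  Matrix.of fun I J => y (I.1 ∪ J.1)

/-- The slack moment matrix `(∑_{e ∈ E} z e · y_{I∪J∪{e}} − y_{I∪J})`, indexed by the subsets
`I, J ⊆ E` with `|I|, |J| ≤ r`. -/
def slackMatrixE {α : Type*} [Fintype α] [DecidableEq α] (E : Finset α) (r : ℕ)
    (y : Finset α → ℝ) (z : α → ℝ) :
    Matrix {S : Finset α // S ⊆ E ∧ S.card ≤ r} {S : Finset α // S ⊆ E ∧ S.card ≤ r} ℝ :=
  Matrix.of fun I J => (∑ e ∈ E, z e * y (insert e (I.1 ∪ J.1))) - y (I.1 ∪ J.1)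

/-- The ambient vertex type for the directed `(2k−1)`-spanner instance built from a projection
games instance with left vertices `L`, right vertices `R` and alphabet `Sg`; `D` is the number
of duplicate vertices (`D = k·K·|Σ|`) and `T` the number of internal vertices of each middle
path (`T = 2k−4`).  The five summands are: the label vertices `c_{i,σ}`, the duplicate vertices
`c_i^l`, the label vertices `x_{j,σ}`, the duplicate vertices `x_j^l`, and the middle-path
vertices `w_{i,j,σL,σR,t}`. -/
abbrev SpV (L R Sg : Type) (D T : ℕ) : Type :=
  (L × Sg) ⊕ (L × Fin D) ⊕ (R × Sg) ⊕ (R × Fin D) ⊕ (L × R × Sg × Sg × Fin T)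

namespace SpV

variable {L R Sg : Type} {D T : ℕ}

/-- The label vertex `c_{i,σ}`. -/
def cLab (i : L) (σ : Sg) : SpV L R Sg D T := Sum.inl (i, σ)

/-- The duplicate vertex `c_i^l`. -/
def cDup (i : L) (l : Fin D) : SpV L R Sg D T := Sum.inr (Sum.inl (i, l))

/-- The label vertex `x_{j,σ}`. -/
def xLab (j : R) (σ : Sg) : SpV L R Sg D T := Sum.inr (Sum.inr (Sum.inl (j, σ)))

/-- The duplicate vertex `x_j^l`. -/
def xDup (j : R) (l : Fin D) : SpV L R Sg D T :=
  Sum.inr (Sum.inr (Sum.inr (Sum.inl (j, l))))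

/-- The middle-path vertex `w_{i,j,σL,σR,t}`. -/
def mid (i : L) (j : R) (σL σR : Sg) (t : Fin T) : SpV L R Sg D T :=
  Sum.inr (Sum.inr (Sum.inr (Sum.inr (i, j, σL, σR, t))))

end SpV

set_option synthInstance.maxSize 1000 in
instance SpV.instDecidableEq {L R Sg : Type} [DecidableEq L] [DecidableEq R] [DecidableEq Sg]
    {D T : ℕ} : DecidableEq (SpV L R Sg D T) := inferInstance

instance SpV.instFintype {L R Sg : Type} [Fintype L] [Fintype R] [Fintype Sg] {D T : ℕ} :
    Fintype (SpV L R Sg D T) := inferInstance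

namespace Spanner

/-- The number `k·K·|Σ|` of duplicate vertices per projection-games vertex. -/
abbrev numDup (Sg : Type) [Fintype Sg] (k K : ℕ) : ℕ := k * K * Fintype.card Sg

/-- The vertex type of the directed spanner instance with parameters `k, K`. -/
abbrev Vt (L R Sg : Type) [Fintype Sg] (k K : ℕ) : Type :=
  SpV L R Sg (numDup Sg k K) (2 * k - 4)

/-- The edge set `E_L = {(c_i^l, c_{i,σ})}`. -/
def ELedges (L R Sg : Type) [Fintype L] [Fintype R] [Fintype Sg]
    [DecidableEq L] [DecidableEq R] [DecidableEq Sg] (k K : ℕ) :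
    Finset (Vt L R Sg k K × Vt L R Sg k K) :=
  Finset.univ.image fun p : L × Fin (numDup Sg k K) × Sg =>
    (SpV.cDup p.1 p.2.1, SpV.cLab p.1 p.2.2)

/-- The edge set `E_R = {(x_{j,σ}, x_j^l)}`. -/
def ERedges (L R Sg : Type) [Fintype L] [Fintype R] [Fintype Sg]
    [DecidableEq L] [DecidableEq R] [DecidableEq Sg] (k K : ℕ) :
    Finset (Vt L R Sg k K × Vt L R Sg k K) :=
  Finset.univ.image fun p : R × Fin (numDup Sg k K) × Sg =>
    (SpV.xLab p.1 p.2.2, SpV.xDup p.1 p.2.1)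

/-- The edge set `E_LStars = {(c_{i,1}, c_{i,σ}), (c_{i,σ}, c_{i,1}) : σ ≠ 1}`
(`σ0` plays the role of the fixed label `1 ∈ Σ`). -/
def ELStars (L R : Type) {Sg : Type} [Fintype L] [Fintype R] [Fintype Sg]
    [DecidableEq L] [DecidableEq R] [DecidableEq Sg] (σ0 : Sg) (k K : ℕ) :
    Finset (Vt L R Sg k K × Vt L R Sg k K) :=
  ((Finset.univ.filter fun p : L × Sg => p.2 ≠ σ0).image fun p =>
      (SpV.cLab p.1 σ0, SpV.cLab p.1 p.2)) ∪
  ((Finset.univ.filter fun p : L × Sg => p.2 ≠ σ0).image fun p =>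
      (SpV.cLab p.1 p.2, SpV.cLab p.1 σ0))

/-- The edge set `E_RStars = {(x_{j,1}, x_{j,σ}), (x_{j,σ}, x_{j,1}) : σ ≠ 1}`. -/
def ERStars (L R : Type) {Sg : Type} [Fintype L] [Fintype R] [Fintype Sg]
    [DecidableEq L] [DecidableEq R] [DecidableEq Sg] (σ0 : Sg) (k K : ℕ) :
    Finset (Vt L R Sg k K × Vt L R Sg k K) :=
  ((Finset.univ.filter fun p : R × Sg => p.2 ≠ σ0).image fun p =>
      (SpV.xLab p.1 σ0, SpV.xLab p.1 p.2)) ∪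
  ((Finset.univ.filter fun p : R × Sg => p.2 ≠ σ0).image fun p =>
      (SpV.xLab p.1 p.2, SpV.xLab p.1 σ0))

/-- The edge set `E_Outer = {(c_i^l, x_j^l) : {c_i, x_j} ∈ E_Proj, l ∈ [kK|Σ|]}`. -/
def EOuter {L R : Type} (Sg : Type) [Fintype L] [Fintype R] [Fintype Sg]
    [DecidableEq L] [DecidableEq R] [DecidableEq Sg]
    (Eproj : Finset (L × R)) (k K : ℕ) :
    Finset (Vt L R Sg k K × Vt L R Sg k K) :=
  (Eproj ×ˢ (Finset.univ : Finset (Fin (numDup Sg k K)))).image fun p =>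
    (SpV.cDup p.1.1 p.2, SpV.xDup p.1.2 p.2)

/-- The vertex sequence `c_{i,σL}, w_{i,j,σL,σR,1}, …, w_{i,j,σL,σR,2k−4}, x_{j,σR}` of the
middle path (for `k = 2` it is just `c_{i,σL}, x_{j,σR}`). -/
def midVerts {L R Sg : Type} [Fintype Sg] (k K : ℕ) (i : L) (j : R) (σL σR : Sg) :
    List (Vt L R Sg k K) :=
  (SpV.cLab i σL :: (List.finRange (2 * k - 4)).map fun t => SpV.mid i j σL σR t) ++
    [SpV.xLab j σR]

/-- The list of consecutive edges of a vertex sequence. -/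
def pathEdges {V : Type*} (vs : List V) : List (V × V) := vs.zip vs.tail

/-- The edge list `E_M^{i,j,σL,σR}` of the middle path from `c_{i,σL}` to `x_{j,σR}`. -/
def EMpath {L R Sg : Type} [Fintype Sg] (k K : ℕ) (i : L) (j : R) (σL σR : Sg) :
    List (Vt L R Sg k K × Vt L R Sg k K) :=
  pathEdges (midVerts k K i j σL σR)

/-- The edge set `E_M = ⋃_{ {c_i,x_j} ∈ E_Proj, (σL,σR) ∈ π_{i,j} } E_M^{i,j,σL,σR}`. -/
def EMedges {L R Sg : Type} [Fintype L] [Fintype R] [Fintype Sg]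
    [DecidableEq L] [DecidableEq R] [DecidableEq Sg]
    (Eproj : Finset (L × R)) (π : L → R → Sg → Sg) (k K : ℕ) :
    Finset (Vt L R Sg k K × Vt L R Sg k K) :=
  Eproj.biUnion fun e => (Finset.univ : Finset Sg).biUnion fun σL =>
    (EMpath k K e.1 e.2 σL (π e.1 e.2 σL)).toFinset

/-- The edge set `E = E_L ∪ E_LStars ∪ E_M ∪ E_RStars ∪ E_R ∪ E_Outer` of the directed
spanner instance. -/
def Edges {L R Sg : Type} [Fintype L] [Fintype R] [Fintype Sg]
    [DecidableEq L] [DecidableEq R] [DecidableEq Sg]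
    (Eproj : Finset (L × R)) (π : L → R → Sg → Sg) (σ0 : Sg) (k K : ℕ) :
    Finset (Vt L R Sg k K × Vt L R Sg k K) :=
  ELedges L R Sg k K ∪ ELStars L R σ0 k K ∪ EMedges Eproj π k K ∪
    ERStars L R σ0 k K ∪ ERedges L R Sg k K ∪ EOuter Sg Eproj k K

/-- The vertex set `V = L_Labels ∪ L_Dups ∪ R_Labels ∪ R_Dups ∪ M_Paths` of the directed
spanner instance. -/
def Verts {L R Sg : Type} [Fintype L] [Fintype R] [Fintype Sg]
    [DecidableEq L] [DecidableEq R] [DecidableEq Sg]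
    (Eproj : Finset (L × R)) (π : L → R → Sg → Sg) (k K : ℕ) :
    Finset (Vt L R Sg k K) :=
  (Finset.univ.image fun p : L × Sg => SpV.cLab p.1 p.2) ∪
  (Finset.univ.image fun p : L × Fin (numDup Sg k K) => SpV.cDup p.1 p.2) ∪
  (Finset.univ.image fun p : R × Sg => SpV.xLab p.1 p.2) ∪
  (Finset.univ.image fun p : R × Fin (numDup Sg k K) => SpV.xDup p.1 p.2) ∪
  (Eproj.biUnion fun e => (Finset.univ : Finset Sg).biUnion fun σL =>
    Finset.univ.image fun t : Fin (2 * k - 4) =>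
      SpV.mid e.1 e.2 σL (π e.1 e.2 σL) t)

/-- The map `Φ` sending an edge of `E ∖ E_Outer` to the corresponding label set:
`Φ((c_i^l, c_{i,σ})) = {(c_i, σ)}`, `Φ((x_{j,σ}, x_j^l)) = {(x_j, σ)}`, and `Φ(e) = ∅` for
`e ∈ E_LStars ∪ E_M ∪ E_RStars`. -/
def Phi {L R Sg : Type} [Fintype Sg] {k K : ℕ}
    (e : Vt L R Sg k K × Vt L R Sg k K) : Finset ((L ⊕ R) × Sg) :=
  match e with
  | (Sum.inr (Sum.inl _), Sum.inl (i, σ)) => {(Sum.inl i, σ)}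
  | (Sum.inr (Sum.inr (Sum.inl (j, σ))), Sum.inr (Sum.inr (Sum.inr (Sum.inl _)))) =>
      {(Sum.inr j, σ)}
  | _ => ∅

/-- The fractional solution `y'` built from a solution `y*` of the projection games SDP:
`y'_S = 0` if `S` contains an edge of `E_Outer`, and `y'_S = y*_{Φ(S)}` otherwise
(where `Φ(S) = ⋃_{e ∈ S} Φ(e)`). -/
def yPrime {L R Sg : Type} [Fintype L] [Fintype R] [Fintype Sg]
    [DecidableEq L] [DecidableEq R] [DecidableEq Sg]
    (Eproj : Finset (L × R)) (k K : ℕ) (ystar : Finset ((L ⊕ R) × Sg) → ℝ)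
    (S : Finset (Vt L R Sg k K × Vt L R Sg k K)) : ℝ :=
  if (S ∩ EOuter Sg Eproj k K).Nonempty then 0 else ystar (S.biUnion Phi)

end Spanner


lemma pullback_psd {α β : Type*} [Fintype α] [Fintype β] [DecidableEq β]
    (A : Matrix β β ℝ) (hA : A.PosSemidef) (g : α → β) (d : α → ℝ) :
    (Matrix.of fun a a' => d a * d a' * A (g a) (g a')).PosSemidef := by
  have key : (Matrix.of fun a a' => d a * d a' * A (g a) (g a')) =
      (Matrix.of fun (a : α) (b : β) => if g a = b then d a else 0) * A *
        ((Matrix.of fun (a : α) (b : β) => if g a = b then d a else 0)).conjTranspose := by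
    ext a a'
    simp only [Matrix.mul_apply, Matrix.conjTranspose_apply, Matrix.of_apply, star_trivial,
      ite_mul, mul_ite, zero_mul, mul_zero, Finset.sum_ite_eq, Finset.sum_ite_eq',
      Finset.mem_univ, if_true]
    ring
  rw [key]
  exact hA.mul_mul_conjTranspose_same _

lemma finset_biUnion_union {α β : Type*} [DecidableEq α] [DecidableEq β]
    (s t : Finset α) (f : α → Finset β) :
    (s ∪ t).biUnion f = s.biUnion f ∪ t.biUnion f := by
  ext x
  simp [Finset.mem_biUnion, Finset.mem_union, or_and_right, exists_or]

set_option maxHeartbeats 1000000 in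
/-- Theorem `main-moment`.  For the directed spanner instance `G = (V,E)`
built (with parameters `k ≥ 2`, `K ≥ 1`) from a projection games instance in which every left
vertex has degree exactly `K`, if the moment matrix `(y*_{Ψ₁∪Ψ₂})_{|Ψ₁|,|Ψ₂| ≤ r+2}` of `y*` is
positive semidefinite, then the moment matrix `M_{r+2}(y') = (y'_{I∪J})`, indexed by the
subsets `I, J ⊆ E` with `|I|, |J| ≤ r+2`, is positive semidefinite, and so is `M_{r+1}(y')`. -/
theorem directed_spanner_moment_matrix_psd
    {L R Sg : Type} [Fintype L] [Fintype R] [Fintype Sg]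
    [DecidableEq L] [DecidableEq R] [DecidableEq Sg]
    (Eproj : Finset (L × R)) (π : L → R → Sg → Sg) (σ0 : Sg) (k K : ℕ)
    (hk : 2 ≤ k) (hK : 1 ≤ K)
    (hdeg : ∀ i : L, (Eproj.filter fun e => e.1 = i).card = K)
    (r : ℕ) (ystar : Finset ((L ⊕ R) × Sg) → ℝ)
    (hM : (Matrix.of fun Ψ₁ Ψ₂ : {S : Finset ((L ⊕ R) × Sg) // S.card ≤ r + 2} =>
      ystar (Ψ₁.1 ∪ Ψ₂.1)).PosSemidef) :
    (momentMatrixE (Spanner.Edges Eproj π σ0 k K) (r + 2)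
      (Spanner.yPrime Eproj k K ystar)).PosSemidef ∧
    (momentMatrixE (Spanner.Edges Eproj π σ0 k K) (r + 1)
      (Spanner.yPrime Eproj k K ystar)).PosSemidef := by
  classical
  have hphi : ∀ e : Spanner.Vt L R Sg k K × Spanner.Vt L R Sg k K,
      (Spanner.Phi e).card ≤ 1 := by
    intro e
    unfold Spanner.Phi
    split <;> simp
  have hcard : ∀ S : Finset (Spanner.Vt L R Sg k K × Spanner.Vt L R Sg k K),
      (S.biUnion Spanner.Phi).card ≤ S.card := by
    intro S
    calc (S.biUnion Spanner.Phi).card ≤ ∑ e ∈ S, (Spanner.Phi e).card :=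
          Finset.card_biUnion_le
      _ ≤ ∑ _e ∈ S, 1 := Finset.sum_le_sum fun e _ => hphi e
      _ = S.card := by simp
  have main : ∀ r' : ℕ, r' ≤ r + 2 →
      (momentMatrixE (Spanner.Edges Eproj π σ0 k K) r'
        (Spanner.yPrime Eproj k K ystar)).PosSemidef := by
    intro r' hr'
    have heq : momentMatrixE (Spanner.Edges Eproj π σ0 k K) r'
          (Spanner.yPrime Eproj k K ystar) =
        Matrix.of fun I J : {S : Finset (Spanner.Vt L R Sg k K × Spanner.Vt L R Sg k K) //
            S ⊆ Spanner.Edges Eproj π σ0 k K ∧ S.card ≤ r'} =>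
          (if (I.1 ∩ Spanner.EOuter Sg Eproj k K).Nonempty then (0:ℝ) else 1) *
          (if (J.1 ∩ Spanner.EOuter Sg Eproj k K).Nonempty then (0:ℝ) else 1) *
          (Matrix.of fun Ψ₁ Ψ₂ : {S : Finset ((L ⊕ R) × Sg) // S.card ≤ r + 2} =>
              ystar (Ψ₁.1 ∪ Ψ₂.1))
            ⟨I.1.biUnion Spanner.Phi, (hcard I.1).trans (I.2.2.trans hr')⟩
            ⟨J.1.biUnion Spanner.Phi, (hcard J.1).trans (J.2.2.trans hr')⟩ := by
      ext I J
      simp only [momentMatrixE, Matrix.of_apply, Spanner.yPrime]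
      rw [Finset.union_inter_distrib_right]
      by_cases hI : (I.1 ∩ Spanner.EOuter Sg Eproj k K).Nonempty
      · rw [if_pos (hI.mono Finset.subset_union_left), if_pos hI, zero_mul, zero_mul]
      · by_cases hJ : (J.1 ∩ Spanner.EOuter Sg Eproj k K).Nonempty
        · rw [if_pos (hJ.mono Finset.subset_union_right), if_neg hI, if_pos hJ, one_mul,
            zero_mul]
        · have hIJ : ¬(I.1 ∩ Spanner.EOuter Sg Eproj k K ∪
              J.1 ∩ Spanner.EOuter Sg Eproj k K).Nonempty := by
            rw [Finset.not_nonempty_iff_eq_empty] at hI hJ ⊢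
            rw [Finset.union_eq_empty]
            exact ⟨hI, hJ⟩
          rw [if_neg hIJ, if_neg hI, if_neg hJ, one_mul, one_mul, finset_biUnion_union]
    rw [heq]
    exact pullback_psd _ hM
      (fun I : {S : Finset (Spanner.Vt L R Sg k K × Spanner.Vt L R Sg k K) //
          S ⊆ Spanner.Edges Eproj π σ0 k K ∧ S.card ≤ r'} => ⟨I.1.biUnion Spanner.Phi, (hcard I.1).trans (I.2.2.trans hr')⟩)
      (fun I => if ((I.1 : Finset _) ∩ Spanner.EOuter Sg Eproj k K).Nonempty then (0:ℝ) else 1)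
  exact ⟨main (r + 2) le_rfl, main (r + 1) (by omega)⟩
end

section
/- Let G = (V,E) be the directed spanner instance built from a projection games instance in which every vertex of L has degree exactly K ≥ 1, with parameter k ≥ 2, let y* be a feasible solution to SDP_Proj^{r+2} (r ≥ 0) satisfying additionally ∑_{(σL,σR)∈π_{i,j}} y*_{{(c_i,σL),(x_j,σR)}} = 1 for every edge {c_i,x_j} ∈ E_Proj, and let y' be built from y*. Then for every edge (u,v) ∈ E_Outer and every z ∈ Z^{u,v} with respect to stretch t = 2k−1, the slack moment matrix with (I,J) entry ∑_{e∈E} z(e)·y'_{I∪J∪{e}} − y'_{I∪J}, indexed by subsets I, J ⊆ E with |I|, |J| ≤ r, is positive semidefinite. -/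
open Finset

/-- A set of (vertex, label) pairs is *inconsistent* if it assigns two different labels to the
same vertex. -/
def Inconsistent {W Sg : Type*} (Ψ : Finset (W × Sg)) : Prop :=
  ∃ v σ σ', σ ≠ σ' ∧ (v, σ) ∈ Ψ ∧ (v, σ') ∈ Ψ

/-- Feasibility for the level-`r` Lasserre SDP for projection games (`SDP_Proj^r`) on the
vertex set `W` (`= L ⊕ R`) with alphabet `Sg`: `y ∅ = 1`, the moment matrix
`(y_{Ψ₁ ∪ Ψ₂})_{|Ψ₁|,|Ψ₂| ≤ r}` is positive semidefinite, and for every vertex `v` and all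
`Ψ₁, Ψ₂` with `|Ψ₁|, |Ψ₂| ≤ r` one has `∑_{σ} y_{Ψ₁∪Ψ₂∪{(v,σ)}} = y_{Ψ₁∪Ψ₂}`. -/
def ProjFeasible {W Sg : Type*} [Fintype W] [Fintype Sg] [DecidableEq W] [DecidableEq Sg]
    (r : ℕ) (y : Finset (W × Sg) → ℝ) : Prop :=
  y ∅ = 1 ∧
  (Matrix.of fun Ψ₁ Ψ₂ : {S : Finset (W × Sg) // S.card ≤ r} => y (Ψ₁.1 ∪ Ψ₂.1)).PosSemidef ∧
  ∀ (v : W) (Ψ₁ Ψ₂ : Finset (W × Sg)), Ψ₁.card ≤ r → Ψ₂.card ≤ r →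
    ∑ σ : Sg, y ((Ψ₁ ∪ Ψ₂) ∪ {(v, σ)}) = y (Ψ₁ ∪ Ψ₂)

section Aux

open Spanner

namespace PEAux
variable {V : Type*}

lemma pathEdges_cons_cons (a b : V) (l : List V) :
    pathEdges (a :: b :: l) = (a, b) :: pathEdges (b :: l) := rfl

lemma pathEdges_concat : ∀ (l : List V) (b : V) (h : l ≠ []),
    pathEdges (l ++ [b]) = pathEdges l ++ [(l.getLast h, b)]
  | [a], b, _ => rfl
  | a :: c :: l, b, _ => by
    calc pathEdges ((a :: c :: l) ++ [b]) = (a, c) :: pathEdges ((c :: l) ++ [b]) := rfl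
    _ = (a, c) :: (pathEdges (c :: l) ++ [((c :: l).getLast (by simp), b)]) := by
        rw [pathEdges_concat (c :: l) b (by simp)]
    _ = pathEdges (a :: c :: l) ++ [((a :: c :: l).getLast (by simp), b)] := by
        rw [List.getLast_cons (by simp : c :: l ≠ [])]; rfl

lemma map_snd_pathEdges (vs : List V) : (pathEdges vs).map Prod.snd = vs.tail :=
  List.map_snd_zip (by cases vs <;> simp)

lemma length_pathEdges (vs : List V) : (pathEdges vs).length = vs.length - 1 := by
  simp only [pathEdges, List.length_zip, List.length_tail]
  omega

lemma chain'_pathEdges : ∀ vs : List V, List.Chain' (fun e f => e.2 = f.1) (pathEdges vs)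
  | [] => by simp [pathEdges]; exact List.isChain_nil
  | [a] => by simp [pathEdges]; exact List.isChain_nil
  | a :: b :: l => by
    rw [pathEdges_cons_cons]; show List.IsChain _ _; rw [List.isChain_cons]
    refine ⟨?_, chain'_pathEdges (b :: l)⟩
    intro y hy
    cases l with
    | nil => simp [pathEdges] at hy
    | cons c l' => simp [pathEdges_cons_cons] at hy; simp [← hy]

lemma head?_pathEdges (a b : V) (l : List V) :
    (pathEdges (a :: b :: l)).head? = some (a, b) := rfl

lemma nodup_pathEdges {vs : List V} (h : vs.Nodup) : (pathEdges vs).Nodup := by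
  have h2 := h.tail
  rw [← map_snd_pathEdges vs] at h2
  exact List.Nodup.of_map _ h2

lemma fst_mem_of_mem_pathEdges {e : V × V} {vs : List V} (h : e ∈ pathEdges vs) :
    e.1 ∈ vs := by
  obtain ⟨a, b⟩ := e
  exact (List.of_mem_zip h).1

end PEAux

namespace PSDAux
variable {ι : Type*} [Fintype ι] [DecidableEq ι] {M : Matrix ι ι ℝ}

lemma quad_eval (M : Matrix ι ι ℝ) (A B : ι) (t : ℝ) :
    dotProduct (fun T => (if T = A then t else 0) + (if T = B then 1 else 0))
      (M.mulVec fun T => (if T = A then t else 0) + (if T = B then 1 else 0)) =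
    t * t * M A A + t * M A B + t * M B A + M B B := by
  simp only [Matrix.mulVec, dotProduct, mul_add, add_mul, mul_ite, ite_mul, mul_zero,
    zero_mul, mul_one, Finset.sum_add_distrib, Finset.sum_ite_eq', Finset.mem_univ, if_true]
  ring

lemma diag_nonneg (hM : M.PosSemidef) (A : ι) : 0 ≤ M A A := by
  have h := hM.dotProduct_mulVec_nonneg (fun T => if T = A then (1 : ℝ) else 0)
  simpa [Matrix.mulVec, dotProduct, mul_ite, ite_mul, Finset.sum_ite_eq',
    star_trivial] using h

lemma offdiag_zero (hM : M.PosSemidef) {A B : ι} (hAA : M A A = 0) : M A B = 0 := by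
  by_cases hAB : A = B
  · rw [← hAB]; exact hAA
  have hsym : M B A = M A B := by
    have := congrFun (congrFun hM.1 A) B
    simpa [Matrix.conjTranspose_apply] using this
  have key : ∀ t : ℝ, 0 ≤ 2 * t * M A B + M B B := by
    intro t
    have h := hM.dotProduct_mulVec_nonneg (fun T => (if T = A then t else 0) + (if T = B then 1 else 0))
    rw [star_trivial, quad_eval M A B t, hAA, hsym] at h
    linarith
  by_contra hne
  have h2 : 2 * ((-M B B - 1)/(2 * M A B)) * M A B = -M B B - 1 := by
    field_simp
  have := key ((-M B B - 1)/(2 * M A B))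
  rw [h2] at this
  linarith

end PSDAux

namespace FeasAux
variable {W Sg : Type*} [Fintype W] [Fintype Sg] [DecidableEq W] [DecidableEq Sg]
variable {N : ℕ} {y : Finset (W × Sg) → ℝ}

lemma nonneg (hf : ProjFeasible N y) {S : Finset (W × Sg)} (hS : S.card ≤ N) : 0 ≤ y S := by
  have := PSDAux.diag_nonneg hf.2.1 (⟨S, hS⟩ : {S : Finset (W × Sg) // S.card ≤ N})
  simpa using this

lemma insert_le (hf : ProjFeasible N y) {S : Finset (W × Sg)} (hS : S.card + 1 ≤ N)
    (a : W × Sg) : y (insert a S) ≤ y S := by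
  obtain ⟨v, σ⟩ := a
  have hm := hf.2.2 v S ∅ (by omega) (by simp)
  have heq : ∀ σ' : Sg, S ∪ {(v, σ')} = insert (v, σ') S := by
    intro σ'; ext b; simp [or_comm]
  simp only [Finset.union_empty, heq] at hm
  rw [← hm]
  exact Finset.single_le_sum
    (fun σ' _ => nonneg hf (le_trans (Finset.card_insert_le _ _) hS)) (Finset.mem_univ σ)

lemma union_le (hf : ProjFeasible N y) : ∀ (U S : Finset (W × Sg)),
    (U ∪ S).card ≤ N → y (U ∪ S) ≤ y S := by
  intro U
  induction U using Finset.induction_on with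
  | empty => intro S h; simp
  | insert a U ha ih =>
    intro S h
    rw [Finset.insert_union] at h ⊢
    by_cases haS : a ∈ U ∪ S
    · rw [Finset.insert_eq_self.2 haS] at h ⊢; exact ih S h
    · have hcard : (U ∪ S).card + 1 ≤ N := by
        rw [Finset.card_insert_of_notMem haS] at h; omega
      exact le_trans (insert_le hf hcard a) (ih S (by omega))

lemma mono (hf : ProjFeasible N y) {S T : Finset (W × Sg)} (hST : S ⊆ T) (hT : T.card ≤ N) :
    y T ≤ y S := by
  have h1 : T \ S ∪ S = T := Finset.sdiff_union_of_subset hST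
  have := union_le hf (T \ S) S (by rw [h1]; exact hT)
  rwa [h1] at this

lemma zero_of_subset (hf : ProjFeasible N y) {S T : Finset (W × Sg)} (hST : S ⊆ T)
    (hT : T.card ≤ N) (h0 : y S = 0) : y T = 0 :=
  le_antisymm (h0 ▸ mono hf hST hT) (nonneg hf hT)

lemma union_zero (hf : ProjFeasible N y) {A B : Finset (W × Sg)} (hA : A.card ≤ N)
    (hB : B.card ≤ N) (h0 : y A = 0) : y (A ∪ B) = 0 := by
  have := PSDAux.offdiag_zero hf.2.1 (A := ⟨A, hA⟩) (B := ⟨B, hB⟩) (by simpa using h0)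
  simpa using this

end FeasAux


namespace GAux
variable {W Sg ι : Type*} [Fintype W] [Fintype Sg] [DecidableEq W] [DecidableEq Sg] [Fintype ι]
variable {N : ℕ}

/-- The quadratic form `g Ψ = ∑_{I,J} x'_I x'_J y_{Ψ ∪ Φm I ∪ Φm J}`. -/
noncomputable def g (y : Finset (W × Sg) → ℝ) (Φm : ι → Finset (W × Sg)) (x' : ι → ℝ)
    (Ψ : Finset (W × Sg)) : ℝ :=
  ∑ I, ∑ J, x' I * x' J * y (Ψ ∪ (Φm I ∪ Φm J))

variable {y : Finset (W × Sg) → ℝ} {Φm : ι → Finset (W × Sg)} {x' : ι → ℝ}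

lemma g_nonneg (hf : ProjFeasible N y) (hΦ : ∀ I, (Φm I).card + 2 ≤ N)
    {Ψ : Finset (W × Sg)} (hΨ : Ψ.card ≤ 2) : 0 ≤ g y Φm x' Ψ := by
  have hc : ∀ I : ι, (Ψ ∪ Φm I).card ≤ N := fun I =>
    le_trans (Finset.card_union_le _ _) (by have := hΦ I; omega)
  have hps := (hf.2.1.submatrix (fun I : ι =>
    (⟨Ψ ∪ Φm I, hc I⟩ : {S : Finset (W × Sg) // S.card ≤ N}))).dotProduct_mulVec_nonneg x'
  rw [star_trivial] at hps
  refine le_trans hps (le_of_eq ?_)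
  simp only [dotProduct, Matrix.mulVec, Matrix.submatrix_apply, Matrix.of_apply, g]
  refine Finset.sum_congr rfl fun I _ => ?_
  rw [Finset.mul_sum]
  refine Finset.sum_congr rfl fun J _ => ?_
  have hU : (Ψ ∪ Φm I) ∪ (Ψ ∪ Φm J) = Ψ ∪ (Φm I ∪ Φm J) := by
    ext a; simp only [Finset.mem_union]; tauto
  rw [hU]
  ring

lemma g_marg (hf : ProjFeasible N y) (hΦ : ∀ I, (Φm I).card + 2 ≤ N)
    {Ψ : Finset (W × Sg)} (hΨ : Ψ.card ≤ 1) (v : W) :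
    ∑ σ : Sg, g y Φm x' (Ψ ∪ {(v, σ)}) = g y Φm x' Ψ := by
  simp only [g]
  calc ∑ σ : Sg, ∑ I, ∑ J, x' I * x' J * y ((Ψ ∪ {(v, σ)}) ∪ (Φm I ∪ Φm J))
      = ∑ I, ∑ σ : Sg, ∑ J, x' I * x' J * y ((Ψ ∪ {(v, σ)}) ∪ (Φm I ∪ Φm J)) :=
        Finset.sum_comm
    _ = ∑ I, ∑ J, ∑ σ : Sg, x' I * x' J * y ((Ψ ∪ {(v, σ)}) ∪ (Φm I ∪ Φm J)) :=
        Finset.sum_congr rfl fun I _ => Finset.sum_comm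
    _ = ∑ I, ∑ J, x' I * x' J * y (Ψ ∪ (Φm I ∪ Φm J)) := by
        refine Finset.sum_congr rfl fun I _ => Finset.sum_congr rfl fun J _ => ?_
        have hm := hf.2.2 v (Ψ ∪ Φm I) (Φm J)
          (le_trans (Finset.card_union_le _ _) (by have := hΦ I; omega))
          (by have := hΦ J; omega)
        have hU : ∀ σ : Sg, ((Ψ ∪ Φm I) ∪ Φm J) ∪ {(v, σ)}
            = (Ψ ∪ {(v, σ)}) ∪ (Φm I ∪ Φm J) := by
          intro σ; ext a; simp only [Finset.mem_union]; tauto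
        simp only [hU] at hm
        rw [← Finset.mul_sum, hm, Finset.union_assoc]

lemma g_zero (hf : ProjFeasible N y) (hΦ : ∀ I, (Φm I).card + 2 ≤ N)
    {Ψ : Finset (W × Sg)} (hΨ : Ψ.card ≤ 2) (h0 : y Ψ = 0) : g y Φm x' Ψ = 0 := by
  refine Finset.sum_eq_zero fun I _ => Finset.sum_eq_zero fun J _ => ?_
  have hcA : (Ψ ∪ Φm I).card ≤ N :=
    le_trans (Finset.card_union_le _ _) (by have := hΦ I; omega)
  have hA : y (Ψ ∪ Φm I) = 0 :=
    FeasAux.zero_of_subset hf Finset.subset_union_left hcA h0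
  have hAB := FeasAux.union_zero hf (B := Φm J) hcA (by have := hΦ J; omega) hA
  rw [Finset.union_assoc] at hAB
  rw [hAB, mul_zero]

lemma pair_zero (hf : ProjFeasible N y) (hN : 2 ≤ N) (u w : W) (pi : Sg → Sg)
    (hyp : ∑ σ : Sg, y {(u, σ), (w, pi σ)} = 1) :
    ∀ σ ρ : Sg, ρ ≠ pi σ → y {(u, σ), (w, ρ)} = 0 := by
  have hmA : ∀ σ : Sg, ∑ ρ : Sg, y {(u, σ), (w, ρ)} = y {(u, σ)} := by
    intro σ
    have hm := hf.2.2 w ({(u, σ)}) ∅ (by simp only [Finset.card_singleton]; omega) (by simp)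
    have hs : ∀ ρ : Sg, (({(u, σ)} : Finset (W × Sg)) ∪ ∅) ∪ {(w, ρ)}
        = {(u, σ), (w, ρ)} := by
      intro ρ; ext a
      simp only [Finset.union_empty, Finset.mem_union, Finset.mem_singleton, Finset.mem_insert]
    simp only [hs, Finset.union_empty] at hm
    exact hm
  have hmB : ∑ σ : Sg, y {(u, σ)} = 1 := by
    have hm := hf.2.2 u ∅ ∅ (by simp) (by simp)
    simp only [Finset.union_empty, Finset.empty_union] at hm
    rw [hm, hf.1]
  have hnn : ∀ σ ρ : Sg, 0 ≤ y {(u, σ), (w, ρ)} := by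
    intro σ ρ
    refine FeasAux.nonneg hf (le_trans (Finset.card_insert_le _ _) ?_)
    simp only [Finset.card_singleton]
    omega
  have hkey : ∑ σ : Sg, ∑ ρ ∈ Finset.univ.erase (pi σ), y {(u, σ), (w, ρ)} = 0 := by
    have hs1 : ∀ σ : Sg, y {(u, σ), (w, pi σ)} +
        ∑ ρ ∈ Finset.univ.erase (pi σ), y {(u, σ), (w, ρ)} = y {(u, σ)} := by
      intro σ
      rw [Finset.add_sum_erase Finset.univ (fun ρ => y {(u, σ), (w, ρ)}) (Finset.mem_univ _)]
      exact hmA σ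
    have hsum := Finset.sum_congr rfl (fun σ (_ : σ ∈ Finset.univ) => hs1 σ)
    rw [Finset.sum_add_distrib, hmB, hyp] at hsum
    linarith
  intro σ ρ hne
  have h1 := (Finset.sum_eq_zero_iff_of_nonneg (fun σ' _ => Finset.sum_nonneg
    (fun ρ' _ => hnn σ' ρ'))).1 hkey σ (Finset.mem_univ _)
  exact (Finset.sum_eq_zero_iff_of_nonneg (fun ρ' _ => hnn σ ρ')).1 h1 ρ
    (Finset.mem_erase.2 ⟨hne, Finset.mem_univ _⟩)

lemma g_ind_left (hf : ProjFeasible N y) (hΦ : ∀ I, (Φm I).card + 2 ≤ N) (u w : W) (σ : Sg) :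
    g y Φm x' {(u, σ)} = ∑ ρ : Sg, g y Φm x' {(u, σ), (w, ρ)} := by
  rw [← g_marg hf hΦ (Ψ := {(u, σ)}) (by simp) w]
  refine Finset.sum_congr rfl fun ρ _ => ?_
  have hU : ({(u, σ)} : Finset (W × Sg)) ∪ {(w, ρ)} = {(u, σ), (w, ρ)} := by
    ext a; simp only [Finset.mem_union, Finset.mem_singleton, Finset.mem_insert]
  rw [hU]

lemma g_ind_right (hf : ProjFeasible N y) (hΦ : ∀ I, (Φm I).card + 2 ≤ N) (u w : W) (ρ : Sg) :
    g y Φm x' {(w, ρ)} = ∑ σ : Sg, g y Φm x' {(u, σ), (w, ρ)} := by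
  rw [← g_marg hf hΦ (Ψ := {(w, ρ)}) (by simp) u]
  refine Finset.sum_congr rfl fun σ _ => ?_
  have hU : ({(w, ρ)} : Finset (W × Sg)) ∪ {(u, σ)} = {(u, σ), (w, ρ)} := by
    ext a
    simp only [Finset.mem_union, Finset.mem_singleton, Finset.mem_insert]
    tauto
  rw [hU]

lemma card_pair_le {u w : W} {σ ρ : Sg} :
    ({(u, σ), (w, ρ)} : Finset (W × Sg)).card ≤ 2 :=
  le_trans (Finset.card_insert_le _ _) (by simp)

lemma g_empty_marg (hf : ProjFeasible N y) (hΦ : ∀ I, (Φm I).card + 2 ≤ N) (u : W) :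
    g y Φm x' ∅ = ∑ σ : Sg, g y Φm x' {(u, σ)} := by
  rw [← g_marg hf hΦ (Ψ := ∅) (by simp) u]
  exact Finset.sum_congr rfl fun σ _ => by rw [Finset.empty_union]

lemma g_decomp (hf : ProjFeasible N y) (hΦ : ∀ I, (Φm I).card + 2 ≤ N) (u w : W)
    (pi : Sg → Sg) (hz : ∀ σ ρ : Sg, ρ ≠ pi σ → g y Φm x' {(u, σ), (w, ρ)} = 0) :
    g y Φm x' ∅ = ∑ σ : Sg, g y Φm x' {(u, σ), (w, pi σ)} := by
  rw [g_empty_marg hf hΦ u]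
  refine Finset.sum_congr rfl fun σ _ => ?_
  rw [g_ind_left hf hΦ u w σ]
  exact Finset.sum_eq_single (pi σ) (fun ρ _ hρ => hz σ ρ hρ) (by simp)

lemma g_le_left (hf : ProjFeasible N y) (hΦ : ∀ I, (Φm I).card + 2 ≤ N) (u w : W)
    (pi : Sg → Sg) (σ : Sg) :
    g y Φm x' {(u, σ), (w, pi σ)} ≤ g y Φm x' {(u, σ)} := by
  rw [g_ind_left hf hΦ u w σ]
  exact Finset.single_le_sum (f := fun ρ => g y Φm x' {(u, σ), (w, ρ)})
    (fun ρ _ => g_nonneg hf hΦ card_pair_le) (Finset.mem_univ _)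

lemma g_le_right (hf : ProjFeasible N y) (hΦ : ∀ I, (Φm I).card + 2 ≤ N) (u w : W)
    (pi : Sg → Sg) (ρ : Sg) :
    ∑ σ ∈ Finset.univ.filter (fun σ => pi σ = ρ), g y Φm x' {(u, σ), (w, pi σ)}
      ≤ g y Φm x' {(w, ρ)} := by
  rw [g_ind_right hf hΦ u w ρ]
  have h1 : ∑ σ ∈ Finset.univ.filter (fun σ => pi σ = ρ), g y Φm x' {(u, σ), (w, pi σ)}
      = ∑ σ ∈ Finset.univ.filter (fun σ => pi σ = ρ), g y Φm x' {(u, σ), (w, ρ)} := by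
    refine Finset.sum_congr rfl fun σ hσ => ?_
    rw [Finset.mem_filter] at hσ
    rw [hσ.2]
  rw [h1]
  exact Finset.sum_le_sum_of_subset_of_nonneg (Finset.filter_subset _ _)
    (fun σ _ _ => g_nonneg hf hΦ card_pair_le)

lemma g_le_empty (hf : ProjFeasible N y) (hΦ : ∀ I, (Φm I).card + 2 ≤ N) (u w : W)
    (pi : Sg → Sg) (hz : ∀ σ ρ : Sg, ρ ≠ pi σ → g y Φm x' {(u, σ), (w, ρ)} = 0) (σ : Sg) :
    g y Φm x' {(u, σ), (w, pi σ)} ≤ g y Φm x' ∅ := by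
  rw [g_decomp hf hΦ u w pi hz]
  exact Finset.single_le_sum (f := fun σ' => g y Φm x' {(u, σ'), (w, pi σ')})
    (fun σ' _ => g_nonneg hf hΦ card_pair_le) (Finset.mem_univ _)

/-- Fubini-type helper for the main slack computation. -/
lemma sum_swap_helper {α : Type*} [DecidableEq α] (Es : Finset α) (z : α → ℝ)
    (F : α → ι → ι → ℝ) (G : ι → ι → ℝ) :
    ∑ I : ι, ∑ J : ι, ((∑ e ∈ Es, z e * F e I J) - G I J)
      = (∑ e ∈ Es, z e * ∑ I : ι, ∑ J : ι, F e I J) - ∑ I : ι, ∑ J : ι, G I J := by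
  simp only [Finset.sum_sub_distrib]
  congr 1
  calc ∑ I : ι, ∑ J : ι, ∑ e ∈ Es, z e * F e I J
      = ∑ I : ι, ∑ e ∈ Es, ∑ J : ι, z e * F e I J :=
        Finset.sum_congr rfl fun I _ => Finset.sum_comm
    _ = ∑ e ∈ Es, ∑ I : ι, ∑ J : ι, z e * F e I J := Finset.sum_comm
    _ = ∑ e ∈ Es, z e * ∑ I : ι, ∑ J : ι, F e I J := by
        refine Finset.sum_congr rfl fun e _ => ?_
        rw [Finset.mul_sum]
        refine Finset.sum_congr rfl fun I _ => ?_
        rw [Finset.mul_sum]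

end GAux

namespace SpannerAux
open SpV
variable {L R Sg : Type} [Fintype L] [Fintype R] [Fintype Sg]
  [DecidableEq L] [DecidableEq R] [DecidableEq Sg] {k K : ℕ}

lemma phi_fst_inl (a : L × Sg) (b : Vt L R Sg k K) :
    Phi ((Sum.inl a : Vt L R Sg k K), b) = ∅ := by
  obtain ⟨a1, a2⟩ := a
  rcases b with ⟨b1, b2⟩ | (⟨b1, b2⟩ | (⟨b1, b2⟩ | (⟨b1, b2⟩ | ⟨b1, b2, b3, b4, b5⟩))) <;> rfl

lemma phi_fst_mid (i : L) (j : R) (σL σR : Sg) (t : Fin (2 * k - 4)) (b : Vt L R Sg k K) :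
    Phi ((SpV.mid i j σL σR t : Vt L R Sg k K), b) = ∅ := by
  rcases b with ⟨b1, b2⟩ | (⟨b1, b2⟩ | (⟨b1, b2⟩ | (⟨b1, b2⟩ | ⟨b1, b2, b3, b4, b5⟩))) <;> rfl

lemma phi_cdup_clab (i i' : L) (l : Fin (numDup Sg k K)) (σ : Sg) :
    Phi ((SpV.cDup i l : Vt L R Sg k K), (SpV.cLab i' σ : Vt L R Sg k K)) =
      ({(Sum.inl i', σ)} : Finset ((L ⊕ R) × Sg)) := rfl

lemma phi_xlab_xdup (j j' : R) (l : Fin (numDup Sg k K)) (ρ : Sg) :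
    Phi ((SpV.xLab j ρ : Vt L R Sg k K), (SpV.xDup j' l : Vt L R Sg k K)) =
      ({(Sum.inr j, ρ)} : Finset ((L ⊕ R) × Sg)) := rfl

lemma phi_card (e : Vt L R Sg k K × Vt L R Sg k K) : (Phi e).card ≤ 1 := by
  rcases e with ⟨a | (a | (a | (a | a))), b | (b | (b | (b | b)))⟩ <;>
    first
      | (obtain ⟨b1, b2⟩ := b; simp [Phi])
      | (obtain ⟨a1, a2⟩ := a; obtain ⟨b1, b2⟩ := b; simp [Phi])
      | simp [Phi]

lemma phiS_card (S : Finset (Vt L R Sg k K × Vt L R Sg k K)) :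
    (S.biUnion Phi).card ≤ S.card := by
  refine le_trans Finset.card_biUnion_le ?_
  calc ∑ e ∈ S, (Phi e).card ≤ ∑ _e ∈ S, 1 := Finset.sum_le_sum (fun e _ => phi_card e)
  _ = S.card := by simp

lemma mem_EMpath_fst {e : Vt L R Sg k K × Vt L R Sg k K} {i : L} {j : R} {σL σR : Sg}
    (h : e ∈ EMpath k K i j σL σR) :
    e.1 = SpV.cLab i σL ∨ ∃ t, e.1 = SpV.mid i j σL σR t := by
  have hne : (SpV.cLab i σL :: (List.finRange (2 * k - 4)).map
      (fun t => (SpV.mid i j σL σR t : Vt L R Sg k K))) ≠ [] := by simp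
  rw [EMpath, midVerts, PEAux.pathEdges_concat _ _ hne] at h
  have hmem : e.1 ∈ (SpV.cLab i σL :: (List.finRange (2 * k - 4)).map
      (fun t => (SpV.mid i j σL σR t : Vt L R Sg k K))) := by
    rcases List.mem_append.1 h with h' | h'
    · exact PEAux.fst_mem_of_mem_pathEdges h'
    · simp only [List.mem_singleton] at h'
      rw [h']
      exact List.getLast_mem hne
  rcases List.mem_cons.1 hmem with h' | h'
  · exact Or.inl h'
  · right
    obtain ⟨t, _, ht⟩ := List.mem_map.1 h'
    exact ⟨t, ht.symm⟩

lemma mem_EMpath_phi {e : Vt L R Sg k K × Vt L R Sg k K} {i : L} {j : R} {σL σR : Sg}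
    (h : e ∈ EMpath k K i j σL σR) : Phi e = ∅ := by
  rcases mem_EMpath_fst h with h' | ⟨t, h'⟩ <;>
    · obtain ⟨e1, e2⟩ := e
      simp only at h'
      subst h'
      first
        | exact phi_fst_inl _ _
        | exact phi_fst_mid _ _ _ _ _ _

lemma mid_injective (i : L) (j : R) (σL σR : Sg) :
    Function.Injective (fun t : Fin (2 * k - 4) => (SpV.mid i j σL σR t : Vt L R Sg k K)) := by
  intro a b hab
  simpa [SpV.mid] using hab

lemma midVerts_nodup (i : L) (j : R) (σL σR : Sg) :
    (Spanner.midVerts k K i j σL σR : List (Vt L R Sg k K)).Nodup := by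
  rw [Spanner.midVerts, List.nodup_append]
  refine ⟨?_, List.nodup_singleton _, ?_⟩
  · rw [List.nodup_cons]
    constructor
    · intro h
      obtain ⟨t, _, ht⟩ := List.mem_map.1 h
      simp [SpV.cLab, SpV.mid] at ht
    · exact (List.nodup_finRange _).map (mid_injective i j σL σR)
  · intro a ha b hb hab
    rw [List.mem_singleton] at hb
    subst hb
    subst hab
    rcases List.mem_cons.1 ha with h | h
    · simp [SpV.cLab, SpV.xLab] at h
    · obtain ⟨t, _, ht⟩ := List.mem_map.1 h
      simp [SpV.xLab, SpV.mid] at ht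

lemma EMpath_nodup (i : L) (j : R) (σL σR : Sg) :
    (Spanner.EMpath k K i j σL σR : List (Vt L R Sg k K × Vt L R Sg k K)).Nodup :=
  PEAux.nodup_pathEdges (midVerts_nodup i j σL σR)

lemma EMpath_length (hk : 2 ≤ k) (i : L) (j : R) (σL σR : Sg) :
    (Spanner.EMpath k K i j σL σR : List (Vt L R Sg k K × Vt L R Sg k K)).length
      = 2 * k - 3 := by
  rw [Spanner.EMpath, PEAux.length_pathEdges, Spanner.midVerts]
  simp only [List.length_append, List.length_cons, List.length_map, List.length_finRange,
    List.length_singleton, List.length_nil]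
  omega

lemma EMpath_ne_nil (hk : 2 ≤ k) (i : L) (j : R) (σL σR : Sg) :
    (Spanner.EMpath k K i j σL σR : List (Vt L R Sg k K × Vt L R Sg k K)) ≠ [] := by
  intro h
  have h2 := EMpath_length (K := K) hk i j σL σR
  have h3 : (Spanner.EMpath k K i j σL σR).length = 0 := by rw [h]; rfl
  omega

lemma EMpath_map_snd (i : L) (j : R) (σL σR : Sg) :
    (Spanner.EMpath k K i j σL σR).map Prod.snd
      = (((List.finRange (2 * k - 4)).map fun t => (SpV.mid i j σL σR t : Vt L R Sg k K))
          ++ [SpV.xLab j σR]) := by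
  rw [Spanner.EMpath, PEAux.map_snd_pathEdges, Spanner.midVerts]
  rfl

lemma EMpath_last_snd (i : L) (j : R) (σL σR : Sg) :
    Option.map Prod.snd (Spanner.EMpath k K i j σL σR).getLast?
      = some (SpV.xLab j σR : Vt L R Sg k K) := by
  rw [← List.getLast?_map, EMpath_map_snd, List.getLast?_concat]

lemma EMpath_head (i : L) (j : R) (σL σR : Sg) :
    ∃ w, (Spanner.EMpath k K i j σL σR).head? = some ((SpV.cLab i σL : Vt L R Sg k K), w) := by
  rw [Spanner.EMpath, Spanner.midVerts]
  obtain ⟨ms, hms⟩ : ∃ ms, ((List.finRange (2 * k - 4)).map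
      fun t => (SpV.mid i j σL σR t : Vt L R Sg k K)) = ms := ⟨_, rfl⟩
  rw [hms]
  cases ms with
  | nil => exact ⟨_, rfl⟩
  | cons m ms' => exact ⟨m, rfl⟩

lemma EMpath_sigma {e : Vt L R Sg k K × Vt L R Sg k K} {i : L} {j : R} {σ σ' ρ ρ' : Sg}
    (h : e ∈ Spanner.EMpath k K i j σ ρ) (h' : e ∈ Spanner.EMpath k K i j σ' ρ') :
    σ = σ' := by
  rcases mem_EMpath_fst h with h1 | ⟨t, h1⟩ <;> rcases mem_EMpath_fst h' with h2 | ⟨t', h2⟩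
  · rw [h1] at h2; simpa [SpV.cLab] using h2
  · rw [h1] at h2; simp [SpV.cLab, SpV.mid] at h2
  · rw [h1] at h2; simp [SpV.cLab, SpV.mid] at h2
  · rw [h1] at h2
    simp only [SpV.mid, Sum.inr.injEq, Prod.mk.injEq] at h2
    exact h2.2.2.1

lemma fullPath_nodup (i : L) (j : R) (l : Fin (numDup Sg k K)) (σ ρ : Sg) :
    ((SpV.cDup i l : Vt L R Sg k K) :: SpV.cLab i σ ::
      ((((List.finRange (2 * k - 4)).map fun t => (SpV.mid i j σ ρ t : Vt L R Sg k K))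
        ++ [SpV.xLab j ρ]) ++ [SpV.xDup j l])).Nodup := by
  have hmv := midVerts_nodup (k := k) (K := K) i j σ ρ
  rw [Spanner.midVerts] at hmv
  rw [List.nodup_cons]
  constructor
  · intro h
    rcases List.mem_cons.1 h with h | h
    · simp [SpV.cDup, SpV.cLab] at h
    rcases List.mem_append.1 h with h | h
    · rcases List.mem_append.1 h with h | h
      · obtain ⟨t, _, ht⟩ := List.mem_map.1 h
        simp [SpV.cDup, SpV.mid] at ht
      · rw [List.mem_singleton] at h
        simp [SpV.cDup, SpV.xLab] at h
    · rw [List.mem_singleton] at h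
      simp [SpV.cDup, SpV.xDup] at h
  · have hshape : (SpV.cLab i σ :: ((((List.finRange (2 * k - 4)).map
        fun t => (SpV.mid i j σ ρ t : Vt L R Sg k K)) ++ [SpV.xLab j ρ]) ++ [SpV.xDup j l]))
        = (((SpV.cLab i σ :: ((List.finRange (2 * k - 4)).map
            fun t => (SpV.mid i j σ ρ t : Vt L R Sg k K))) ++ [SpV.xLab j ρ])
              ++ [SpV.xDup j l]) := by
      simp
    rw [hshape, List.nodup_append]
    refine ⟨hmv, List.nodup_singleton _, ?_⟩
    intro a ha b hb hab
    rw [List.mem_singleton] at hb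
    subst hb
    subst hab
    rcases List.mem_append.1 ha with h | h
    · rcases List.mem_cons.1 h with h | h
      · simp [SpV.xDup, SpV.cLab] at h
      · obtain ⟨t, _, ht⟩ := List.mem_map.1 h
        simp [SpV.xDup, SpV.mid] at ht
    · rw [List.mem_singleton] at h
      simp [SpV.xDup, SpV.xLab] at h

lemma ELmem (i : L) (l : Fin (numDup Sg k K)) (σ : Sg) :
    ((SpV.cDup i l : Vt L R Sg k K), (SpV.cLab i σ : Vt L R Sg k K))
      ∈ Spanner.ELedges L R Sg k K := by
  rw [Spanner.ELedges, Finset.mem_image]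
  exact ⟨(i, l, σ), Finset.mem_univ _, rfl⟩

lemma ERmem (j : R) (l : Fin (numDup Sg k K)) (ρ : Sg) :
    ((SpV.xLab j ρ : Vt L R Sg k K), (SpV.xDup j l : Vt L R Sg k K))
      ∈ Spanner.ERedges L R Sg k K := by
  rw [Spanner.ERedges, Finset.mem_image]
  exact ⟨(j, l, ρ), Finset.mem_univ _, rfl⟩

lemma EMmem {Eproj : Finset (L × R)} {π : L → R → Sg → Sg} {i : L} {j : R}
    (hij : (i, j) ∈ Eproj) (σ : Sg) {e : Vt L R Sg k K × Vt L R Sg k K}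
    (he : e ∈ Spanner.EMpath k K i j σ (π i j σ)) : e ∈ Spanner.EMedges Eproj π k K := by
  rw [Spanner.EMedges, Finset.mem_biUnion]
  exact ⟨(i, j), hij, Finset.mem_biUnion.2 ⟨σ, Finset.mem_univ _, List.mem_toFinset.2 he⟩⟩

lemma mem_Edges_of {Eproj : Finset (L × R)} {π : L → R → Sg → Sg} {σ0 : Sg}
    {a : Vt L R Sg k K × Vt L R Sg k K}
    (h : a ∈ Spanner.ELedges L R Sg k K ∨ a ∈ Spanner.EMedges Eproj π k K ∨
      a ∈ Spanner.ERedges L R Sg k K) : a ∈ Spanner.Edges Eproj π σ0 k K := by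
  rw [Spanner.Edges]
  rcases h with h | h | h <;> simp [Finset.mem_union, h]

lemma EOuter_shape {Eproj : Finset (L × R)} {a : Vt L R Sg k K × Vt L R Sg k K}
    (h : a ∈ Spanner.EOuter Sg Eproj k K) :
    (∃ i' l', a.1 = (SpV.cDup i' l' : Vt L R Sg k K)) ∧
      (∃ j' l', a.2 = (SpV.xDup j' l' : Vt L R Sg k K)) := by
  rw [Spanner.EOuter, Finset.mem_image] at h
  obtain ⟨⟨⟨i', j'⟩, l'⟩, -, rfl⟩ := h
  exact ⟨⟨i', l', rfl⟩, ⟨j', l', rfl⟩⟩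

lemma canonical_path (hk : 2 ≤ k) {Eproj : Finset (L × R)} (π : L → R → Sg → Sg) (σ0 : Sg)
    {i : L} {j : R} (hij : (i, j) ∈ Eproj) (l : Fin (numDup Sg k K)) (σ : Sg) :
    IsDirPath (Spanner.Edges Eproj π σ0 k K) (SpV.cDup i l) (SpV.xDup j l)
      (((SpV.cDup i l : Vt L R Sg k K), (SpV.cLab i σ : Vt L R Sg k K)) ::
        (Spanner.EMpath k K i j σ (π i j σ)
          ++ [((SpV.xLab j (π i j σ) : Vt L R Sg k K), (SpV.xDup j l : Vt L R Sg k K))])) := by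
  refine ⟨by simp, ?_, ?_, ?_, ?_, ?_⟩
  · intro e he
    rcases List.mem_cons.1 he with rfl | he
    · exact mem_Edges_of (Or.inl (ELmem i l σ))
    rcases List.mem_append.1 he with he | he
    · exact mem_Edges_of (Or.inr (Or.inl (EMmem hij σ he)))
    · rw [List.mem_singleton] at he
      subst he
      exact mem_Edges_of (Or.inr (Or.inr (ERmem j l _)))
  · rfl
  · rw [show (((SpV.cDup i l : Vt L R Sg k K), (SpV.cLab i σ : Vt L R Sg k K)) ::
        (Spanner.EMpath k K i j σ (π i j σ)
          ++ [((SpV.xLab j (π i j σ) : Vt L R Sg k K), (SpV.xDup j l : Vt L R Sg k K))]))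
        = ((((SpV.cDup i l : Vt L R Sg k K), (SpV.cLab i σ : Vt L R Sg k K)) ::
            Spanner.EMpath k K i j σ (π i j σ))
          ++ [((SpV.xLab j (π i j σ) : Vt L R Sg k K), (SpV.xDup j l : Vt L R Sg k K))])
        from rfl, List.getLast?_concat]
    rfl
  · show List.IsChain _ _; rw [List.isChain_cons]
    constructor
    · intro y hy
      obtain ⟨hd, tl, hEM⟩ := List.exists_cons_of_ne_nil (EMpath_ne_nil (K := K) hk i j σ (π i j σ))
      obtain ⟨w, hw⟩ := EMpath_head (K := K) i j σ (π i j σ)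
      rw [hEM] at hw
      simp only [List.head?_cons, Option.some.injEq] at hw
      rw [hEM, List.cons_append, List.head?_cons, Option.mem_def, Option.some.injEq] at hy
      subst hy
      rw [hw]
    · refine List.IsChain.append
        (PEAux.chain'_pathEdges (Spanner.midVerts k K i j σ (π i j σ)))
        (List.isChain_singleton _) ?_
      intro e he f hf
      simp only [List.head?_cons, Option.mem_def, Option.some.injEq] at hf
      subst hf
      have hlast := EMpath_last_snd (k := k) (K := K) i j σ (π i j σ)
      rw [Option.mem_def] at he
      rw [he] at hlast
      simpa using hlast
  · rw [List.map_cons, List.map_append, EMpath_map_snd]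
    simpa using fullPath_nodup i j l σ (π i j σ)

lemma combine {Sg : Type*} [Fintype Sg] [DecidableEq Sg] (pi : Sg → Sg)
    (h a b c A C : Sg → ℝ) (B : ℝ)
    (hh : ∀ σ, 0 ≤ h σ) (ha : ∀ σ, 0 ≤ a σ) (hb : ∀ σ, 0 ≤ b σ) (hc : ∀ ρ, 0 ≤ c ρ)
    (hA : ∀ σ, h σ ≤ A σ) (hB : ∀ σ, h σ ≤ B)
    (hC : ∀ ρ, ∑ σ ∈ Finset.univ.filter (fun σ => pi σ = ρ), h σ ≤ C ρ)
    (hpath : ∀ σ, 1 ≤ a σ + b σ + c (pi σ)) :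
    ∑ σ, h σ ≤ (∑ σ, a σ * A σ) + ((∑ σ, b σ * B) + (∑ ρ, c ρ * C ρ)) := by
  have s1 : ∑ σ, a σ * h σ ≤ ∑ σ, a σ * A σ :=
    Finset.sum_le_sum fun σ _ => mul_le_mul_of_nonneg_left (hA σ) (ha σ)
  have s2 : ∑ σ, b σ * h σ ≤ ∑ σ, b σ * B :=
    Finset.sum_le_sum fun σ _ => mul_le_mul_of_nonneg_left (hB σ) (hb σ)
  have s3 : ∑ σ, c (pi σ) * h σ ≤ ∑ ρ, c ρ * C ρ := by
    have e1 : ∑ σ, c (pi σ) * h σ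
        = ∑ ρ, ∑ σ ∈ Finset.univ.filter (fun σ => pi σ = ρ), c (pi σ) * h σ :=
      (Finset.sum_fiberwise _ _ _).symm
    have e2 : ∀ ρ, ∑ σ ∈ Finset.univ.filter (fun σ => pi σ = ρ), c (pi σ) * h σ
        = c ρ * ∑ σ ∈ Finset.univ.filter (fun σ => pi σ = ρ), h σ := by
      intro ρ
      rw [Finset.mul_sum]
      refine Finset.sum_congr rfl fun σ hσ => ?_
      rw [Finset.mem_filter] at hσ
      rw [hσ.2]
    rw [e1]
    calc ∑ ρ, ∑ σ ∈ Finset.univ.filter (fun σ => pi σ = ρ), c (pi σ) * h σ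
        = ∑ ρ, c ρ * ∑ σ ∈ Finset.univ.filter (fun σ => pi σ = ρ), h σ :=
          Finset.sum_congr rfl fun ρ _ => e2 ρ
      _ ≤ ∑ ρ, c ρ * C ρ :=
          Finset.sum_le_sum fun ρ _ => mul_le_mul_of_nonneg_left (hC ρ) (hc ρ)
  have s4 : ∑ σ, h σ ≤ ∑ σ, (a σ * h σ + b σ * h σ + c (pi σ) * h σ) := by
    refine Finset.sum_le_sum fun σ _ => ?_
    nlinarith [hh σ, hpath σ]
  have s5 : ∑ σ, (a σ * h σ + b σ * h σ + c (pi σ) * h σ)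
      = (∑ σ, a σ * h σ) + ((∑ σ, b σ * h σ) + (∑ σ, c (pi σ) * h σ)) := by
    simp [Finset.sum_add_distrib, add_assoc]
  linarith [s4, s5.le, s5.ge, s1, s2, s3]

end SpannerAux

end Aux
set_option maxHeartbeats 2000000 in
/-- Theorem `Eouter`.  For the directed spanner instance `G = (V,E)` built
(with parameters `k ≥ 2`, `K ≥ 1`) from a projection games instance in which every left vertex
has degree exactly `K`, and the fractional solution `y'` built from a feasible solution `y*`
of `SDP_Proj^{r+2}` which moreover satisfies every edge of the projection game completely
(`∑_{(σL,σR)∈π_{i,j}} y*_{{(c_i,σL),(x_j,σR)}} = 1`): for every edge `(u,v) ∈ E_Outer` and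
every `z ∈ Z^{u,v}` (with respect to stretch `2k−1`), the slack moment matrix
`(∑_{e∈E} z e · y'_{I∪J∪{e}} − y'_{I∪J})_{I,J ⊆ E, |I|,|J| ≤ r}` is positive semidefinite. -/
theorem directed_spanner_slack_psd_outer_edges
    {L R Sg : Type} [Fintype L] [Fintype R] [Fintype Sg]
    [DecidableEq L] [DecidableEq R] [DecidableEq Sg]
    (Eproj : Finset (L × R)) (π : L → R → Sg → Sg) (σ0 : Sg) (k K : ℕ)
    (hk : 2 ≤ k) (hK : 1 ≤ K)
    (hdeg : ∀ i : L, (Eproj.filter fun e => e.1 = i).card = K)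
    (r : ℕ) (ystar : Finset ((L ⊕ R) × Sg) → ℝ)
    (hfeas : ProjFeasible (r + 2) ystar)
    (hsat : ∀ e ∈ Eproj,
      ∑ σL : Sg, ystar {(Sum.inl e.1, σL), (Sum.inr e.2, π e.1 e.2 σL)} = 1) :
    ∀ e ∈ Spanner.EOuter Sg Eproj k K,
      ∀ z : Spanner.Vt L R Sg k K × Spanner.Vt L R Sg k K → ℝ,
        InZ (Spanner.Edges Eproj π σ0 k K) (2 * k - 1) e.1 e.2 z →
        (slackMatrixE (Spanner.Edges Eproj π σ0 k K) r
          (Spanner.yPrime Eproj k K ystar) z).PosSemidef := by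
  classical
  rintro e he z hz
  rw [Spanner.EOuter, Finset.mem_image] at he
  obtain ⟨⟨⟨i, j⟩, l⟩, hp, rfl⟩ := he
  rw [Finset.mem_product] at hp
  have hij : (i, j) ∈ Eproj := hp.1
  dsimp only at hz ⊢
  have hyP0 : ∀ S, (S ∩ Spanner.EOuter Sg Eproj k K).Nonempty →
      Spanner.yPrime Eproj k K ystar S = 0 := by
    intro S h; rw [Spanner.yPrime, if_pos h]
  have hyPv : ∀ S, ¬ (S ∩ Spanner.EOuter Sg Eproj k K).Nonempty →
      Spanner.yPrime Eproj k K ystar S = ystar (S.biUnion Spanner.Phi) := by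
    intro S h; rw [Spanner.yPrime, if_neg h]
  rw [Matrix.posSemidef_iff_dotProduct_mulVec]
  constructor
  · -- Hermitian
    ext I J
    simp only [slackMatrixE, Matrix.conjTranspose_apply, Matrix.of_apply, star_trivial,
      RCLike.star_def, starRingEnd_apply]
    rw [Finset.union_comm J.1 I.1]
  · intro x
    rw [star_trivial]
    have hEoSub : Spanner.EOuter Sg Eproj k K ⊆ Spanner.Edges Eproj π σ0 k K := by
      intro a ha
      rw [Spanner.Edges]
      exact Finset.mem_union_right _ ha
    set x' : {S : Finset (Spanner.Vt L R Sg k K × Spanner.Vt L R Sg k K) //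
        S ⊆ Spanner.Edges Eproj π σ0 k K ∧ S.card ≤ r} → ℝ :=
      fun I => if (I.1 ∩ Spanner.EOuter Sg Eproj k K).Nonempty then 0 else x I with hx'def
    set Φm : {S : Finset (Spanner.Vt L R Sg k K × Spanner.Vt L R Sg k K) //
        S ⊆ Spanner.Edges Eproj π σ0 k K ∧ S.card ≤ r} → Finset ((L ⊕ R) × Sg) :=
      fun I => I.1.biUnion Spanner.Phi with hPhimdef
    have hΦc : ∀ I, (Φm I).card + 2 ≤ r + 2 := by
      intro I
      have h1 := SpannerAux.phiS_card I.1
      have h2 := I.2.2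
      simp only [hPhimdef]
      omega
    -- the key facts about g
    have hgnn : ∀ Ψ : Finset ((L ⊕ R) × Sg), Ψ.card ≤ 2 → 0 ≤ GAux.g ystar Φm x' Ψ :=
      fun Ψ h => GAux.g_nonneg hfeas hΦc h
    have hpz : ∀ σ ρ : Sg, ρ ≠ π i j σ →
        ystar {((Sum.inl i : L ⊕ R), σ), (Sum.inr j, ρ)} = 0 :=
      GAux.pair_zero hfeas (by omega) (Sum.inl i) (Sum.inr j) (fun σ => π i j σ)
        (hsat (i, j) hij)
    have hgz : ∀ σ ρ : Sg, ρ ≠ π i j σ →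
        GAux.g ystar Φm x' {(Sum.inl i, σ), (Sum.inr j, ρ)} = 0 :=
      fun σ ρ h => GAux.g_zero hfeas hΦc GAux.card_pair_le (hpz σ ρ h)
    have hgsum : GAux.g ystar Φm x' ∅
        = ∑ σ : Sg, GAux.g ystar Φm x' {(Sum.inl i, σ), (Sum.inr j, π i j σ)} :=
      GAux.g_decomp hfeas hΦc (Sum.inl i) (Sum.inr j) (fun σ => π i j σ) hgz
    have hge1 : ∀ σ : Sg, GAux.g ystar Φm x' {(Sum.inl i, σ), (Sum.inr j, π i j σ)}
        ≤ GAux.g ystar Φm x' {((Sum.inl i : L ⊕ R), σ)} :=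
      fun σ => GAux.g_le_left hfeas hΦc (Sum.inl i) (Sum.inr j) (fun σ => π i j σ) σ
    have hge2 : ∀ ρ : Sg, ∑ σ ∈ Finset.univ.filter (fun σ => π i j σ = ρ),
        GAux.g ystar Φm x' {(Sum.inl i, σ), (Sum.inr j, π i j σ)}
        ≤ GAux.g ystar Φm x' {((Sum.inr j : L ⊕ R), ρ)} :=
      fun ρ => GAux.g_le_right hfeas hΦc (Sum.inl i) (Sum.inr j) (fun σ => π i j σ) ρ
    have hg0 : ∀ σ : Sg, GAux.g ystar Φm x' {(Sum.inl i, σ), (Sum.inr j, π i j σ)}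
        ≤ GAux.g ystar Φm x' ∅ :=
      fun σ => GAux.g_le_empty hfeas hΦc (Sum.inl i) (Sum.inr j) (fun σ => π i j σ) hgz σ
    -- quadratic form as a double sum
    have hql : dotProduct x (Matrix.mulVec (slackMatrixE (Spanner.Edges Eproj π σ0 k K) r
        (Spanner.yPrime Eproj k K ystar) z) x)
        = ∑ I, ∑ J, x I * x J * ((∑ e ∈ Spanner.Edges Eproj π σ0 k K,
            z e * Spanner.yPrime Eproj k K ystar (insert e (I.1 ∪ J.1)))
            - Spanner.yPrime Eproj k K ystar (I.1 ∪ J.1)) := by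
      simp only [dotProduct, Matrix.mulVec, slackMatrixE, Matrix.of_apply,
        Finset.mul_sum]
      exact Finset.sum_congr rfl fun I _ => Finset.sum_congr rfl fun J _ => by ring
    -- replace x by x'
    have hswap : ∑ I, ∑ J, x I * x J * ((∑ e ∈ Spanner.Edges Eproj π σ0 k K,
            z e * Spanner.yPrime Eproj k K ystar (insert e (I.1 ∪ J.1)))
            - Spanner.yPrime Eproj k K ystar (I.1 ∪ J.1))
        = ∑ I, ∑ J, x' I * x' J * ((∑ e ∈ Spanner.Edges Eproj π σ0 k K,
            z e * Spanner.yPrime Eproj k K ystar (insert e (I.1 ∪ J.1)))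
            - Spanner.yPrime Eproj k K ystar (I.1 ∪ J.1)) := by
      refine Finset.sum_congr rfl fun I _ => Finset.sum_congr rfl fun J _ => ?_
      by_cases hI : (I.1 ∩ Spanner.EOuter Sg Eproj k K).Nonempty
      · have hIJ : ((I.1 ∪ J.1) ∩ Spanner.EOuter Sg Eproj k K).Nonempty := by
          obtain ⟨a, ha⟩ := hI
          rw [Finset.mem_inter] at ha
          exact ⟨a, Finset.mem_inter.2 ⟨Finset.mem_union_left _ ha.1, ha.2⟩⟩
        have hz1 : Spanner.yPrime Eproj k K ystar (I.1 ∪ J.1) = 0 := hyP0 _ hIJ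
        have hz2 : ∀ e, Spanner.yPrime Eproj k K ystar (insert e (I.1 ∪ J.1)) = 0 := by
          intro e
          refine hyP0 _ ?_
          obtain ⟨a, ha⟩ := hIJ
          rw [Finset.mem_inter] at ha
          exact ⟨a, Finset.mem_inter.2 ⟨Finset.mem_insert_of_mem ha.1, ha.2⟩⟩
        simp only [hz1, hz2, mul_zero, Finset.sum_const_zero, sub_zero]
      · by_cases hJ : (J.1 ∩ Spanner.EOuter Sg Eproj k K).Nonempty
        · have hIJ : ((I.1 ∪ J.1) ∩ Spanner.EOuter Sg Eproj k K).Nonempty := by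
            obtain ⟨a, ha⟩ := hJ
            rw [Finset.mem_inter] at ha
            exact ⟨a, Finset.mem_inter.2 ⟨Finset.mem_union_right _ ha.1, ha.2⟩⟩
          have hz1 : Spanner.yPrime Eproj k K ystar (I.1 ∪ J.1) = 0 := hyP0 _ hIJ
          have hz2 : ∀ e, Spanner.yPrime Eproj k K ystar (insert e (I.1 ∪ J.1)) = 0 := by
            intro e
            refine hyP0 _ ?_
            obtain ⟨a, ha⟩ := hIJ
            rw [Finset.mem_inter] at ha
            exact ⟨a, Finset.mem_inter.2 ⟨Finset.mem_insert_of_mem ha.1, ha.2⟩⟩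
          simp only [hz1, hz2, mul_zero, Finset.sum_const_zero, sub_zero]
        · simp only [hx'def, if_neg hI, if_neg hJ]
    -- termwise identification
    have hterm : ∀ I J : {S : Finset (Spanner.Vt L R Sg k K × Spanner.Vt L R Sg k K) //
        S ⊆ Spanner.Edges Eproj π σ0 k K ∧ S.card ≤ r},
        x' I * x' J * ((∑ e ∈ Spanner.Edges Eproj π σ0 k K,
            z e * Spanner.yPrime Eproj k K ystar (insert e (I.1 ∪ J.1)))
            - Spanner.yPrime Eproj k K ystar (I.1 ∪ J.1))
        = (∑ e ∈ Spanner.Edges Eproj π σ0 k K \ Spanner.EOuter Sg Eproj k K,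
            z e * (x' I * x' J * ystar (Spanner.Phi e ∪ (Φm I ∪ Φm J))))
            - x' I * x' J * ystar (Φm I ∪ Φm J) := by
      intro I J
      by_cases hI : (I.1 ∩ Spanner.EOuter Sg Eproj k K).Nonempty
      · simp only [hx'def, if_pos hI, zero_mul, mul_zero, Finset.sum_const_zero, sub_zero]
      by_cases hJ : (J.1 ∩ Spanner.EOuter Sg Eproj k K).Nonempty
      · simp only [hx'def, if_pos hJ, zero_mul, mul_zero, mul_comm, Finset.sum_const_zero]
        simp
      have hIJ : ¬ ((I.1 ∪ J.1) ∩ Spanner.EOuter Sg Eproj k K).Nonempty := by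
        intro h
        obtain ⟨a, ha⟩ := h
        rw [Finset.mem_inter, Finset.mem_union] at ha
        rcases ha.1 with h' | h'
        · exact hI ⟨a, Finset.mem_inter.2 ⟨h', ha.2⟩⟩
        · exact hJ ⟨a, Finset.mem_inter.2 ⟨h', ha.2⟩⟩
      have hbu : (I.1 ∪ J.1).biUnion Spanner.Phi = Φm I ∪ Φm J := by
        simp only [hPhimdef]
        ext a
        simp only [Finset.mem_biUnion, Finset.mem_union]
        constructor
        · rintro ⟨e, he | he, ha⟩
          · exact Or.inl ⟨e, he, ha⟩
          · exact Or.inr ⟨e, he, ha⟩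
        · rintro (⟨e, he, ha⟩ | ⟨e, he, ha⟩)
          · exact ⟨e, Or.inl he, ha⟩
          · exact ⟨e, Or.inr he, ha⟩
      have hv1 : Spanner.yPrime Eproj k K ystar (I.1 ∪ J.1) = ystar (Φm I ∪ Φm J) := by
        rw [hyPv _ hIJ, hbu]
      have hv2 : ∀ e ∈ Spanner.Edges Eproj π σ0 k K \ Spanner.EOuter Sg Eproj k K,
          Spanner.yPrime Eproj k K ystar (insert e (I.1 ∪ J.1))
          = ystar (Spanner.Phi e ∪ (Φm I ∪ Φm J)) := by
        intro e he
        rw [Finset.mem_sdiff] at he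
        have hcl : ¬ ((insert e (I.1 ∪ J.1)) ∩ Spanner.EOuter Sg Eproj k K).Nonempty := by
          intro h
          obtain ⟨a, ha⟩ := h
          rw [Finset.mem_inter, Finset.mem_insert] at ha
          rcases ha.1 with rfl | h'
          · exact he.2 ha.2
          · exact hIJ ⟨a, Finset.mem_inter.2 ⟨h', ha.2⟩⟩
        rw [hyPv _ hcl, Finset.biUnion_insert, hbu]
      have hsplit : ∑ e ∈ Spanner.Edges Eproj π σ0 k K,
          z e * Spanner.yPrime Eproj k K ystar (insert e (I.1 ∪ J.1))
          = ∑ e ∈ Spanner.Edges Eproj π σ0 k K \ Spanner.EOuter Sg Eproj k K,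
            z e * ystar (Spanner.Phi e ∪ (Φm I ∪ Φm J)) := by
        rw [← Finset.sum_sdiff hEoSub]
        have h0 : ∑ e ∈ Spanner.EOuter Sg Eproj k K,
            z e * Spanner.yPrime Eproj k K ystar (insert e (I.1 ∪ J.1)) = 0 := by
          refine Finset.sum_eq_zero fun e he => ?_
          have : Spanner.yPrime Eproj k K ystar (insert e (I.1 ∪ J.1)) = 0 :=
            hyP0 _ ⟨e, Finset.mem_inter.2 ⟨Finset.mem_insert_self _ _, he⟩⟩
          rw [this, mul_zero]
        rw [h0, add_zero]
        exact Finset.sum_congr rfl fun e he => by rw [hv2 e he]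
      rw [hsplit, hv1, mul_sub]
      rw [Finset.mul_sum]
      congr 1
      exact Finset.sum_congr rfl fun e _ => by ring
    -- the master identity
    have hgempty : GAux.g ystar Φm x' ∅
        = ∑ I, ∑ J, x' I * x' J * ystar (Φm I ∪ Φm J) := by
      simp only [GAux.g, Finset.empty_union]
    have hmain : ∑ I, ∑ J, x' I * x' J * ((∑ e ∈ Spanner.Edges Eproj π σ0 k K,
            z e * Spanner.yPrime Eproj k K ystar (insert e (I.1 ∪ J.1)))
            - Spanner.yPrime Eproj k K ystar (I.1 ∪ J.1))
        = (∑ e ∈ Spanner.Edges Eproj π σ0 k K \ Spanner.EOuter Sg Eproj k K,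
            z e * GAux.g ystar Φm x' (Spanner.Phi e)) - GAux.g ystar Φm x' ∅ := by
      rw [Finset.sum_congr rfl fun I _ => Finset.sum_congr rfl fun J _ => hterm I J]
      rw [GAux.sum_swap_helper]
      rw [hgempty]
      rfl
    -- the path inequality
    have hineq : GAux.g ystar Φm x' ∅ ≤ ∑ e ∈ Spanner.Edges Eproj π σ0 k K \
        Spanner.EOuter Sg Eproj k K, z e * GAux.g ystar Φm x' (Spanner.Phi e) := by
      have hzE : ∀ e ∈ Spanner.Edges Eproj π σ0 k K, 0 ≤ z e := fun e he => (hz.1 e he).1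
      have hpathsum : ∀ σ : Sg, 1 ≤ z (SpV.cDup i l, SpV.cLab i σ)
          + (((Spanner.EMpath k K i j σ (π i j σ)).map z).sum
            + z (SpV.xLab j (π i j σ), SpV.xDup j l)) := by
        intro σ
        have hp := hz.2 _ (SpannerAux.canonical_path hk π σ0 hij l σ) (by
          simp only [List.length_cons, List.length_append,
            SpannerAux.EMpath_length hk i j σ (π i j σ), List.length_singleton,
            List.length_nil]
          omega)
        have hs : ((((SpV.cDup i l : Spanner.Vt L R Sg k K), SpV.cLab i σ) ::
            (Spanner.EMpath k K i j σ (π i j σ)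
              ++ [(SpV.xLab j (π i j σ), SpV.xDup j l)])).map z).sum
            = z (SpV.cDup i l, SpV.cLab i σ)
              + (((Spanner.EMpath k K i j σ (π i j σ)).map z).sum
                + z (SpV.xLab j (π i j σ), SpV.xDup j l)) := by
          simp [List.map_append, List.sum_append]
        rw [hs] at hp
        exact hp
      have hbnn : ∀ σ : Sg, 0 ≤ ((Spanner.EMpath k K i j σ (π i j σ)).map z).sum := by
        intro σ
        refine List.sum_nonneg ?_
        intro q hq
        obtain ⟨e, he, rfl⟩ := List.mem_map.1 hq
        exact hzE e (SpannerAux.mem_Edges_of (Or.inr (Or.inl (SpannerAux.EMmem hij σ he))))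
      have hcomb := SpannerAux.combine (fun σ => π i j σ)
        (fun σ => GAux.g ystar Φm x' {(Sum.inl i, σ), (Sum.inr j, π i j σ)})
        (fun σ => z (SpV.cDup i l, SpV.cLab i σ))
        (fun σ => ((Spanner.EMpath k K i j σ (π i j σ)).map z).sum)
        (fun ρ => z (SpV.xLab j ρ, SpV.xDup j l))
        (fun σ => GAux.g ystar Φm x' {((Sum.inl i : L ⊕ R), σ)})
        (fun ρ => GAux.g ystar Φm x' {((Sum.inr j : L ⊕ R), ρ)})
        (GAux.g ystar Φm x' ∅)
        (fun σ => hgnn _ GAux.card_pair_le)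
        (fun σ => hzE _ (SpannerAux.mem_Edges_of (Or.inl (SpannerAux.ELmem i l σ))))
        hbnn
        (fun ρ => hzE _ (SpannerAux.mem_Edges_of (Or.inr (Or.inr (SpannerAux.ERmem j l ρ)))))
        hge1 hg0 hge2 (fun σ => by have := hpathsum σ; linarith)
      -- sums over the canonical edge sets
      have hs1 : ∑ e ∈ Finset.image (fun σ : Sg =>
            (((SpV.cDup i l : Spanner.Vt L R Sg k K), SpV.cLab i σ))) Finset.univ,
          z e * GAux.g ystar Φm x' (Spanner.Phi e)
          = ∑ σ : Sg, z (SpV.cDup i l, SpV.cLab i σ)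
            * GAux.g ystar Φm x' {((Sum.inl i : L ⊕ R), σ)} := by
        rw [Finset.sum_image (by
          intro a _ b _ hab
          simpa [SpV.cLab, Prod.ext_iff] using hab)]
        refine Finset.sum_congr rfl fun σ _ => ?_
        rw [SpannerAux.phi_cdup_clab]
      have hpd : Set.PairwiseDisjoint (↑(Finset.univ : Finset Sg))
          (fun σ : Sg => (Spanner.EMpath k K i j σ (π i j σ)).toFinset) := by
        intro σ1 _ σ2 _ hne
        rw [Function.onFun, Finset.disjoint_left]
        intro a ha hb
        rw [List.mem_toFinset] at ha hb
        exact hne (SpannerAux.EMpath_sigma ha hb)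
      have hs2 : ∑ e ∈ Finset.univ.biUnion (fun σ : Sg =>
            (Spanner.EMpath k K i j σ (π i j σ)).toFinset),
          z e * GAux.g ystar Φm x' (Spanner.Phi e)
          = ∑ σ : Sg, ((Spanner.EMpath k K i j σ (π i j σ)).map z).sum
            * GAux.g ystar Φm x' ∅ := by
        rw [Finset.sum_biUnion hpd]
        refine Finset.sum_congr rfl fun σ _ => ?_
        have h1 : ∀ e ∈ (Spanner.EMpath k K i j σ (π i j σ)).toFinset,
            z e * GAux.g ystar Φm x' (Spanner.Phi e)
            = z e * GAux.g ystar Φm x' ∅ := by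
          intro e he
          rw [SpannerAux.mem_EMpath_phi (List.mem_toFinset.1 he)]
        rw [Finset.sum_congr rfl h1, ← Finset.sum_mul]
        congr 1
        exact List.sum_toFinset z (SpannerAux.EMpath_nodup i j σ (π i j σ))
      have hs3 : ∑ e ∈ Finset.image (fun ρ : Sg =>
            (((SpV.xLab j ρ : Spanner.Vt L R Sg k K), SpV.xDup j l))) Finset.univ,
          z e * GAux.g ystar Φm x' (Spanner.Phi e)
          = ∑ ρ : Sg, z (SpV.xLab j ρ, SpV.xDup j l)
            * GAux.g ystar Φm x' {((Sum.inr j : L ⊕ R), ρ)} := by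
        rw [Finset.sum_image (by
          intro a _ b _ hab
          simpa [SpV.xLab, Prod.ext_iff] using hab)]
        refine Finset.sum_congr rfl fun ρ _ => ?_
        rw [SpannerAux.phi_xlab_xdup]
      have hd2 : Disjoint (Finset.univ.biUnion (fun σ : Sg =>
            (Spanner.EMpath k K i j σ (π i j σ)).toFinset))
          (Finset.image (fun ρ : Sg =>
            (((SpV.xLab j ρ : Spanner.Vt L R Sg k K), SpV.xDup j l))) Finset.univ) := by
        rw [Finset.disjoint_left]
        intro a ha hb
        rw [Finset.mem_biUnion] at ha
        obtain ⟨σ', -, ha⟩ := ha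
        rw [List.mem_toFinset] at ha
        rw [Finset.mem_image] at hb
        obtain ⟨ρ', -, hb⟩ := hb
        rcases SpannerAux.mem_EMpath_fst ha with h1 | ⟨t, h1⟩ <;>
          (rw [← hb] at h1; simp [SpV.cLab, SpV.xLab, SpV.mid] at h1)
      have hd1 : Disjoint (Finset.image (fun σ : Sg =>
            (((SpV.cDup i l : Spanner.Vt L R Sg k K), SpV.cLab i σ))) Finset.univ)
          (Finset.univ.biUnion (fun σ : Sg =>
              (Spanner.EMpath k K i j σ (π i j σ)).toFinset)
            ∪ Finset.image (fun ρ : Sg =>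
              (((SpV.xLab j ρ : Spanner.Vt L R Sg k K), SpV.xDup j l))) Finset.univ) := by
        rw [Finset.disjoint_left]
        intro a ha hb
        rw [Finset.mem_image] at ha
        obtain ⟨σ', -, rfl⟩ := ha
        rw [Finset.mem_union] at hb
        rcases hb with hb | hb
        · rw [Finset.mem_biUnion] at hb
          obtain ⟨σ2, -, hb⟩ := hb
          rw [List.mem_toFinset] at hb
          rcases SpannerAux.mem_EMpath_fst hb with h1 | ⟨t, h1⟩ <;>
            simp [SpV.cDup, SpV.cLab, SpV.mid] at h1
        · rw [Finset.mem_image] at hb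
          obtain ⟨ρ', -, hb⟩ := hb
          have h1 := congrArg Prod.fst hb
          simp [SpV.cDup, SpV.xLab] at h1
      have hPsub : Finset.image (fun σ : Sg =>
            (((SpV.cDup i l : Spanner.Vt L R Sg k K), SpV.cLab i σ))) Finset.univ
          ∪ (Finset.univ.biUnion (fun σ : Sg =>
              (Spanner.EMpath k K i j σ (π i j σ)).toFinset)
            ∪ Finset.image (fun ρ : Sg =>
              (((SpV.xLab j ρ : Spanner.Vt L R Sg k K), SpV.xDup j l))) Finset.univ)
          ⊆ Spanner.Edges Eproj π σ0 k K \ Spanner.EOuter Sg Eproj k K := by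
        intro a ha
        rw [Finset.mem_union, Finset.mem_union] at ha
        rw [Finset.mem_sdiff]
        rcases ha with ha | ha | ha
        · rw [Finset.mem_image] at ha
          obtain ⟨σ', -, rfl⟩ := ha
          refine ⟨SpannerAux.mem_Edges_of (Or.inl (SpannerAux.ELmem i l σ')), ?_⟩
          intro hmem
          obtain ⟨-, ⟨j', l', h2⟩⟩ := SpannerAux.EOuter_shape hmem
          simp [SpV.cLab, SpV.xDup] at h2
        · rw [Finset.mem_biUnion] at ha
          obtain ⟨σ', -, ha⟩ := ha
          rw [List.mem_toFinset] at ha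
          refine ⟨SpannerAux.mem_Edges_of (Or.inr (Or.inl (SpannerAux.EMmem hij σ' ha))), ?_⟩
          intro hmem
          obtain ⟨⟨i', l', h1⟩, -⟩ := SpannerAux.EOuter_shape hmem
          rcases SpannerAux.mem_EMpath_fst ha with h2 | ⟨t, h2⟩ <;>
            (rw [h1] at h2; simp [SpV.cDup, SpV.cLab, SpV.mid] at h2)
        · rw [Finset.mem_image] at ha
          obtain ⟨ρ', -, rfl⟩ := ha
          refine ⟨SpannerAux.mem_Edges_of (Or.inr (Or.inr (SpannerAux.ERmem j l ρ'))), ?_⟩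
          intro hmem
          obtain ⟨⟨i', l', h1⟩, -⟩ := SpannerAux.EOuter_shape hmem
          simp [SpV.xLab, SpV.cDup] at h1
      have hfinal : (∑ σ : Sg, z (SpV.cDup i l, SpV.cLab i σ)
            * GAux.g ystar Φm x' {((Sum.inl i : L ⊕ R), σ)})
          + ((∑ σ : Sg, ((Spanner.EMpath k K i j σ (π i j σ)).map z).sum
              * GAux.g ystar Φm x' ∅)
            + (∑ ρ : Sg, z (SpV.xLab j ρ, SpV.xDup j l)
              * GAux.g ystar Φm x' {((Sum.inr j : L ⊕ R), ρ)}))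
          ≤ ∑ e ∈ Spanner.Edges Eproj π σ0 k K \ Spanner.EOuter Sg Eproj k K,
            z e * GAux.g ystar Φm x' (Spanner.Phi e) := by
        rw [← hs1, ← hs2, ← hs3, ← Finset.sum_union hd2, ← Finset.sum_union hd1]
        exact Finset.sum_le_sum_of_subset_of_nonneg hPsub (fun e he _ =>
          mul_nonneg (hzE e (Finset.mem_sdiff.1 he).1)
            (hgnn _ (le_trans (SpannerAux.phi_card e) (by omega))))
      rw [hgsum]
      exact le_trans hcomb hfinal
    rw [hql, hswap, hmain]
    linarith [hineq]
end

section
/- Let G = (V,E) be the directed spanner instance built from a projection games instance in which every vertex of L has degree exactly K ≥ 1, with parameter k ≥ 2. Then for every {c_i,x_j} ∈ E_Proj and every l ∈ [kK|Σ|], the directed paths in G from c_i^l to x_j^l with at most 2k−1 edges are exactly the following: (a) the single-edge path consisting of the edge (c_i^l, x_j^l); and (b) for each (σL,σR) ∈ π_{i,j}, the path of exactly 2k−1 edges consisting of the edge (c_i^l, c_{i,σL}), followed by the path E_M^{i,j,σL,σR}, followed by the edge (x_{j,σR}, x_j^l). -/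
open Finset

namespace Spanner

section Helpers

/-! ### Generic `pathEdges` lemmas -/

theorem pathEdges_length {V : Type*} (vs : List V) :
    (pathEdges vs).length = vs.length - 1 := by
  rw [pathEdges, List.length_zip, List.length_tail]
  omega

theorem pathEdges_getElem {V : Type*} (vs : List V) (m : ℕ)
    (h : m < (pathEdges vs).length) :
    (pathEdges vs)[m] =
      (vs[m]'(by rw [pathEdges_length] at h; omega),
       vs[m+1]'(by rw [pathEdges_length] at h; omega)) := by
  simp only [pathEdges, List.getElem_zip, List.getElem_tail]

theorem mem_pathEdges_iff {V : Type*} {vs : List V} {e : V × V} :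
    e ∈ pathEdges vs ↔ ∃ m, ∃ h : m + 1 < vs.length,
      e = (vs[m]'(Nat.lt_of_succ_lt h), vs[m+1]'h) := by
  rw [List.mem_iff_getElem]
  constructor
  · rintro ⟨m, h, rfl⟩
    exact ⟨m, by rw [pathEdges_length] at h; omega, pathEdges_getElem vs m h⟩
  · rintro ⟨m, h, rfl⟩
    exact ⟨m, by rw [pathEdges_length]; omega,
      pathEdges_getElem vs m (by rw [pathEdges_length]; omega)⟩

theorem getElem_idx_congr {V : Type*} (l : List V) {m n : ℕ} (h : m = n)
    (hm : m < l.length) : l[m] = l[n]'(h ▸ hm) := by subst h; rfl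

theorem chain'_pathEdges {V : Type*} (vs : List V) :
    List.Chain' (fun e f => e.2 = f.1) (pathEdges vs) := by
  rw [List.Chain', List.isChain_iff_getElem]
  intro i h
  rw [pathEdges_getElem, pathEdges_getElem]

theorem map_snd_pathEdges {V : Type*} (vs : List V) :
    (pathEdges vs).map Prod.snd = vs.tail :=
  List.map_snd_zip (by rw [List.length_tail]; omega)

/-- Any directed path is the edge list of its vertex sequence. -/
theorem dirPath_eq_pathEdges {V : Type*} [DecidableEq V] {E : Finset (V × V)} {u v : V}
    {p : List (V × V)} (hp : IsDirPath E u v p) :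
    p = pathEdges (u :: p.map Prod.snd) := by
  obtain ⟨hne, hE, hhead, hlast, hchain, hnd⟩ := hp
  have hplen : 0 < p.length := List.length_pos_iff.mpr hne
  have hhead0 : p[0].1 = u := by
    rw [List.head?_eq_getElem?, List.getElem?_eq_getElem hplen] at hhead
    simpa using hhead
  apply List.ext_getElem
  · rw [pathEdges_length]
    simp
  · intro n h1 h2
    rw [pathEdges_getElem]
    have hsnd : (u :: p.map Prod.snd)[n+1]'(by simpa using h1) = p[n].2 := by
      rw [List.getElem_cons_succ]
      simp
    have hfst : (u :: p.map Prod.snd)[n]'(by simp; omega) = p[n].1 := by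
      rcases n with _ | m
      · simpa using hhead0.symm
      · rw [List.getElem_cons_succ]
        have := List.isChain_iff_getElem.mp hchain m (by omega)
        simp [this]
    rw [hfst, hsnd]

theorem dirPath_last {V : Type*} [DecidableEq V] {E : Finset (V × V)} {u v : V}
    {p : List (V × V)} (hp : IsDirPath E u v p) :
    (p[p.length - 1]'(by have := List.length_pos_iff.mpr hp.1; omega)).2 = v := by
  obtain ⟨hne, hE, hhead, hlast, hchain, hnd⟩ := hp
  rw [List.getLast?_eq_getLast hne] at hlast
  rw [List.getLast_eq_getElem] at hlast
  simpa using hlast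

end Helpers

section Spv

variable {L R Sg : Type} [Fintype L] [Fintype R] [Fintype Sg]
  [DecidableEq L] [DecidableEq R] [DecidableEq Sg]

/-- Rank function used to measure progress along a path in the spanner instance. -/
def rk {D T : ℕ} : SpV L R Sg D T → ℕ
  | Sum.inl _ => T + 2
  | Sum.inr (Sum.inl _) => T + 3
  | Sum.inr (Sum.inr (Sum.inl _)) => 1
  | Sum.inr (Sum.inr (Sum.inr (Sum.inl _))) => 0
  | Sum.inr (Sum.inr (Sum.inr (Sum.inr (_, _, _, _, t)))) => T + 1 - t

@[simp] theorem rk_cLab {D T : ℕ} (i : L) (σ : Sg) :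
    rk (SpV.cLab i σ : SpV L R Sg D T) = T + 2 := rfl

@[simp] theorem rk_cDup {D T : ℕ} (i : L) (l : Fin D) :
    rk (SpV.cDup i l : SpV L R Sg D T) = T + 3 := rfl

@[simp] theorem rk_xLab {D T : ℕ} (j : R) (σ : Sg) :
    rk (SpV.xLab j σ : SpV L R Sg D T) = 1 := rfl

@[simp] theorem rk_xDup {D T : ℕ} (j : R) (l : Fin D) :
    rk (SpV.xDup j l : SpV L R Sg D T) = 0 := rfl

@[simp] theorem rk_mid {D T : ℕ} (i : L) (j : R) (σL σR : Sg) (t : Fin T) :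
    rk (SpV.mid i j σL σR t : SpV L R Sg D T) = T + 1 - t := rfl

end Spv

section MidVerts

variable {L R Sg : Type} [Fintype L] [Fintype R] [Fintype Sg]
  [DecidableEq L] [DecidableEq R] [DecidableEq Sg] {k K : ℕ}

theorem midVerts_length (i : L) (j : R) (σL σR : Sg) :
    (midVerts (L := L) (R := R) k K i j σL σR).length = 2*k - 4 + 2 := by
  simp [midVerts]

theorem midVerts_getElem (i : L) (j : R) (σL σR : Sg) (m : ℕ)
    (h : m < (midVerts (L := L) (R := R) k K i j σL σR).length) :
    (midVerts k K i j σL σR)[m] =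
      if h0 : m = 0 then SpV.cLab i σL
      else if hm : m ≤ 2*k - 4 then
        SpV.mid i j σL σR ⟨m - 1, by omega⟩
      else SpV.xLab j σR := by
  rw [midVerts_length] at h
  rcases Nat.eq_zero_or_pos m with h0 | h0
  · subst h0
    rw [dif_pos rfl]
    rfl
  · obtain ⟨m', rfl⟩ : ∃ m', m = m' + 1 := ⟨m - 1, by omega⟩
    rw [dif_neg (by omega)]
    show (SpV.cLab i σL :: (((List.finRange (2*k-4)).map fun t => SpV.mid i j σL σR t)
        ++ [SpV.xLab j σR]))[m'+1]'(by simp; omega) = _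
    rw [List.getElem_cons_succ]
    by_cases hm : m' < 2*k - 4
    · rw [dif_pos (by omega)]
      rw [List.getElem_append_left (by simpa using hm), List.getElem_map,
        List.getElem_finRange]
      rfl
    · rw [dif_neg (by omega)]
      rw [List.getElem_append_right (by simpa using hm)]
      simp

theorem rk_midVerts (i : L) (j : R) (σL σR : Sg) (m : ℕ)
    (h : m < (midVerts (L := L) (R := R) k K i j σL σR).length) :
    rk ((midVerts k K i j σL σR)[m]) = 2*k - 4 + 2 - m := by
  rw [midVerts_length] at h
  rw [midVerts_getElem _ _ _ _ _ (by rw [midVerts_length]; omega)]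
  rcases Nat.eq_zero_or_pos m with h0 | h0
  · subst h0; simp
  · rw [dif_neg (by omega)]
    by_cases hm : m ≤ 2*k - 4
    · rw [dif_pos hm]
      simp only [rk_mid]
      omega
    · rw [dif_neg hm]
      simp only [rk_xLab]
      omega

theorem midVerts_eq_cLab {i i' : L} {j : R} {σL σR σ' : Sg} {m : ℕ}
    (h : m + 1 < (midVerts (L := L) (R := R) k K i j σL σR).length)
    (he : (midVerts k K i j σL σR)[m]'(Nat.lt_of_succ_lt h) = SpV.cLab i' σ') :
    m = 0 ∧ i' = i ∧ σ' = σL := by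
  rw [midVerts_getElem _ _ _ _ _ (Nat.lt_of_succ_lt h)] at he
  rcases Nat.eq_zero_or_pos m with h0 | h0
  · subst h0
    rw [dif_pos rfl] at he
    simp only [SpV.cLab, Sum.inl.injEq, Prod.mk.injEq] at he
    exact ⟨rfl, he.1.symm, he.2.symm⟩
  · rw [dif_neg (by omega)] at he
    by_cases hm : m ≤ 2*k - 4
    · rw [dif_pos hm] at he
      simp [SpV.mid, SpV.cLab] at he
    · rw [dif_neg hm] at he
      simp [SpV.xLab, SpV.cLab] at he

theorem midVerts_eq_mid {i i' : L} {j j' : R} {σL σR σL' σR' : Sg} {m : ℕ} {t : Fin (2*k-4)}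
    (h : m < (midVerts (L := L) (R := R) k K i j σL σR).length)
    (he : (midVerts k K i j σL σR)[m] = SpV.mid i' j' σL' σR' t) :
    m = (t : ℕ) + 1 ∧ i' = i ∧ j' = j ∧ σL' = σL ∧ σR' = σR := by
  have hlen := h
  rw [midVerts_length] at hlen
  rw [midVerts_getElem _ _ _ _ _ h] at he
  rcases Nat.eq_zero_or_pos m with h0 | h0
  · subst h0
    rw [dif_pos rfl] at he
    simp [SpV.mid, SpV.cLab] at he
  · rw [dif_neg (by omega)] at he
    by_cases hm : m ≤ 2*k - 4
    · rw [dif_pos hm] at he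
      simp only [SpV.mid, Sum.inr.injEq, Prod.mk.injEq] at he
      obtain ⟨h1, h2, h3, h4, h5⟩ := he
      have : (t : ℕ) = m - 1 := by rw [← h5]
      refine ⟨by omega, h1.symm, h2.symm, h3.symm, h4.symm⟩
    · rw [dif_neg hm] at he
      simp [SpV.xLab, SpV.mid] at he

end MidVerts


section EdgesClassification

set_option linter.unusedSectionVars false

variable {L R Sg : Type} [Fintype L] [Fintype R] [Fintype Sg]
  [DecidableEq L] [DecidableEq R] [DecidableEq Sg]
  {Eproj : Finset (L × R)} {π : L → R → Sg → Sg} {σ0 : Sg} {k K : ℕ}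

theorem mem_Edges_iff {e : Vt L R Sg k K × Vt L R Sg k K} :
    e ∈ Edges Eproj π σ0 k K ↔
      (∃ i l σ, e = (SpV.cDup i l, SpV.cLab i σ)) ∨
      (∃ i : L, ∃ σ : Sg, σ ≠ σ0 ∧
        (e = (SpV.cLab i σ0, SpV.cLab i σ) ∨ e = (SpV.cLab i σ, SpV.cLab i σ0))) ∨
      (∃ i j σL m, ∃ h : m + 1 < (midVerts (L := L) (R := R) k K i j σL (π i j σL)).length,
        (i, j) ∈ Eproj ∧
        e = ((midVerts k K i j σL (π i j σL))[m]'(Nat.lt_of_succ_lt h),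
             (midVerts k K i j σL (π i j σL))[m+1]'h)) ∨
      (∃ j : R, ∃ σ : Sg, σ ≠ σ0 ∧
        (e = (SpV.xLab j σ0, SpV.xLab j σ) ∨ e = (SpV.xLab j σ, SpV.xLab j σ0))) ∨
      (∃ j l σ, e = (SpV.xLab j σ, SpV.xDup j l)) ∨
      (∃ i j l, (i, j) ∈ Eproj ∧ e = (SpV.cDup i l, SpV.xDup j l)) := by
  constructor
  · intro he
    simp only [Edges, Finset.mem_union] at he
    rcases he with ((((he | he) | he) | he) | he) | he
    · left
      simp only [ELedges, Finset.mem_image, Finset.mem_univ, true_and] at he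
      obtain ⟨⟨a, b, c⟩, h⟩ := he
      exact ⟨a, b, c, h.symm⟩
    · right; left
      simp only [ELStars, Finset.mem_union, Finset.mem_image, Finset.mem_filter,
        Finset.mem_univ, true_and] at he
      rcases he with ⟨⟨a, b⟩, hb, h⟩ | ⟨⟨a, b⟩, hb, h⟩
      exacts [⟨a, b, hb, Or.inl h.symm⟩, ⟨a, b, hb, Or.inr h.symm⟩]
    · right; right; left
      simp only [EMedges, Finset.mem_biUnion, Finset.mem_univ, true_and,
        List.mem_toFinset, exists_true_left] at he
      obtain ⟨⟨a, b⟩, hab, σL, hm⟩ := he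
      rw [EMpath, mem_pathEdges_iff] at hm
      obtain ⟨m, h, rfl⟩ := hm
      exact ⟨a, b, σL, m, h, hab, rfl⟩
    · right; right; right; left
      simp only [ERStars, Finset.mem_union, Finset.mem_image, Finset.mem_filter,
        Finset.mem_univ, true_and] at he
      rcases he with ⟨⟨a, b⟩, hb, h⟩ | ⟨⟨a, b⟩, hb, h⟩
      exacts [⟨a, b, hb, Or.inl h.symm⟩, ⟨a, b, hb, Or.inr h.symm⟩]
    · right; right; right; right; left
      simp only [ERedges, Finset.mem_image, Finset.mem_univ, true_and] at he
      obtain ⟨⟨a, b, c⟩, h⟩ := he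
      exact ⟨a, b, c, h.symm⟩
    · right; right; right; right; right
      simp only [EOuter, Finset.mem_image, Finset.mem_product, Finset.mem_univ,
        and_true] at he
      obtain ⟨⟨⟨a, b⟩, c⟩, hab, h⟩ := he
      exact ⟨a, b, c, hab, h.symm⟩
  · intro h
    simp only [Edges, Finset.mem_union]
    rcases h with ⟨i, l, σ, rfl⟩ | ⟨i, σ, hσ, (rfl | rfl)⟩ |
        ⟨i, j, σL, m, h, hij, rfl⟩ | ⟨j, σ, hσ, (rfl | rfl)⟩ |
        ⟨j, l, σ, rfl⟩ | ⟨i, j, l, hij, rfl⟩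
    · refine Or.inl (Or.inl (Or.inl (Or.inl (Or.inl ?_))))
      simp only [ELedges, Finset.mem_image, Finset.mem_univ, true_and]
      exact ⟨(i, l, σ), rfl⟩
    · refine Or.inl (Or.inl (Or.inl (Or.inl (Or.inr ?_))))
      simp only [ELStars, Finset.mem_union, Finset.mem_image, Finset.mem_filter,
        Finset.mem_univ, true_and]
      exact Or.inl ⟨(i, σ), hσ, rfl⟩
    · refine Or.inl (Or.inl (Or.inl (Or.inl (Or.inr ?_))))
      simp only [ELStars, Finset.mem_union, Finset.mem_image, Finset.mem_filter,
        Finset.mem_univ, true_and]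
      exact Or.inr ⟨(i, σ), hσ, rfl⟩
    · refine Or.inl (Or.inl (Or.inl (Or.inr ?_)))
      simp only [EMedges, Finset.mem_biUnion, Finset.mem_univ, true_and,
        List.mem_toFinset, exists_true_left]
      refine ⟨(i, j), hij, σL, ?_⟩
      rw [EMpath, mem_pathEdges_iff]
      exact ⟨m, h, rfl⟩
    · refine Or.inl (Or.inl (Or.inr ?_))
      simp only [ERStars, Finset.mem_union, Finset.mem_image, Finset.mem_filter,
        Finset.mem_univ, true_and]
      exact Or.inl ⟨(j, σ), hσ, rfl⟩
    · refine Or.inl (Or.inl (Or.inr ?_))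
      simp only [ERStars, Finset.mem_union, Finset.mem_image, Finset.mem_filter,
        Finset.mem_univ, true_and]
      exact Or.inr ⟨(j, σ), hσ, rfl⟩
    · refine Or.inl (Or.inr ?_)
      simp only [ERedges, Finset.mem_image, Finset.mem_univ, true_and]
      exact ⟨(j, l, σ), rfl⟩
    · refine Or.inr ?_
      simp only [EOuter, Finset.mem_image, Finset.mem_product, Finset.mem_univ,
        and_true]
      exact ⟨((i, j), l), hij, rfl⟩

theorem rk_src_pos {e : Vt L R Sg k K × Vt L R Sg k K}
    (he : e ∈ Edges Eproj π σ0 k K) : 1 ≤ rk e.1 := by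
  have hfst : ∀ (a b : Vt L R Sg k K), (Prod.mk a b).1 = a := fun _ _ => rfl
  rcases mem_Edges_iff.mp he with ⟨i, l, σ, rfl⟩ | ⟨i, σ, hσ, (rfl | rfl)⟩ |
      ⟨i, j, σL, m, h, hij, rfl⟩ | ⟨j, σ, hσ, (rfl | rfl)⟩ |
      ⟨j, l, σ, rfl⟩ | ⟨i, j, l, hij, rfl⟩
  · simp
  · simp
  · simp
  · have hlen := h
    rw [midVerts_length] at hlen
    rw [hfst, rk_midVerts i j σL (π i j σL) m (Nat.lt_of_succ_lt h)]
    omega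
  · simp
  · simp
  · simp
  · simp

theorem rk_tgt_le {e : Vt L R Sg k K × Vt L R Sg k K}
    (he : e ∈ Edges Eproj π σ0 k K) : rk e.2 ≤ 2*k - 4 + 2 := by
  have hsnd : ∀ (a b : Vt L R Sg k K), (Prod.mk a b).2 = b := fun _ _ => rfl
  rcases mem_Edges_iff.mp he with ⟨i, l, σ, rfl⟩ | ⟨i, σ, hσ, (rfl | rfl)⟩ |
      ⟨i, j, σL, m, h, hij, rfl⟩ | ⟨j, σ, hσ, (rfl | rfl)⟩ |
      ⟨j, l, σ, rfl⟩ | ⟨i, j, l, hij, rfl⟩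
  · simp
  · simp
  · simp
  · rw [hsnd, rk_midVerts i j σL (π i j σL) (m+1) h]
    omega
  · simp
  · simp
  · simp
  · simp

theorem rk_step {e : Vt L R Sg k K × Vt L R Sg k K}
    (he : e ∈ Edges Eproj π σ0 k K) (h1 : rk e.1 ≤ 2*k - 4 + 2) :
    rk e.1 ≤ rk e.2 + 1 := by
  have hfst : ∀ (a b : Vt L R Sg k K), (Prod.mk a b).1 = a := fun _ _ => rfl
  have hsnd : ∀ (a b : Vt L R Sg k K), (Prod.mk a b).2 = b := fun _ _ => rfl
  rcases mem_Edges_iff.mp he with ⟨i, l, σ, rfl⟩ | ⟨i, σ, hσ, (rfl | rfl)⟩ |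
      ⟨i, j, σL, m, h, hij, rfl⟩ | ⟨j, σ, hσ, (rfl | rfl)⟩ |
      ⟨j, l, σ, rfl⟩ | ⟨i, j, l, hij, rfl⟩
  · simp
  · simp
  · simp
  · have hlen := h
    rw [midVerts_length] at hlen
    rw [hfst, hsnd, rk_midVerts i j σL (π i j σL) m (Nat.lt_of_succ_lt h),
      rk_midVerts i j σL (π i j σL) (m+1) h]
    omega
  · simp
  · simp
  · simp
  · rw [hfst] at h1
    simp only [rk_cDup] at h1
    omega

end EdgesClassification


section StdList

set_option linter.unusedSectionVars false

variable {L R Sg : Type} [Fintype L] [Fintype R] [Fintype Sg]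
  [DecidableEq L] [DecidableEq R] [DecidableEq Sg]
  {Eproj : Finset (L × R)} {π : L → R → Sg → Sg} {σ0 : Sg} {k K : ℕ}

theorem stdList_length (i : L) (j : R) (σL σR : Sg) (l : Fin (numDup Sg k K)) :
    (SpV.cDup i l :: midVerts k K i j σL σR ++ [SpV.xDup j l] :
      List (Vt L R Sg k K)).length = 2*k - 4 + 4 := by
  simp [midVerts_length]

theorem stdList_getElem (i : L) (j : R) (σL σR : Sg) (l : Fin (numDup Sg k K)) (m : ℕ)
    (h : m < 2*k - 4 + 4) :
    (SpV.cDup i l :: midVerts k K i j σL σR ++ [SpV.xDup j l] :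
        List (Vt L R Sg k K))[m]'(by rw [stdList_length]; omega) =
      if m = 0 then SpV.cDup i l
      else if hm : m ≤ 2*k - 4 + 2 then
        (midVerts k K i j σL σR)[m - 1]'(by rw [midVerts_length]; omega)
      else SpV.xDup j l := by
  by_cases h0 : m = 0
  · subst h0
    rw [if_pos rfl,
      List.getElem_append_left (by rw [List.length_cons, midVerts_length]; omega),
      List.getElem_cons_zero]
  · obtain ⟨m', rfl⟩ : ∃ m', m = m' + 1 := ⟨m - 1, by omega⟩
    rw [if_neg h0]
    by_cases hm : m' + 1 ≤ 2*k - 4 + 2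
    · rw [dif_pos hm,
        List.getElem_append_left (by rw [List.length_cons, midVerts_length]; omega),
        List.getElem_cons_succ]
      simp only [Nat.add_sub_cancel]
    · rw [dif_neg hm,
        List.getElem_append_right (by rw [List.length_cons, midVerts_length]; omega)]
      simp

theorem rk_stdList (i : L) (j : R) (σL σR : Sg) (l : Fin (numDup Sg k K)) (m : ℕ)
    (h : m < 2*k - 4 + 4) :
    rk ((SpV.cDup i l :: midVerts k K i j σL σR ++ [SpV.xDup j l] :
        List (Vt L R Sg k K))[m]'(by rw [stdList_length]; omega)) =
      2*k - 4 + 3 - m := by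
  rw [stdList_getElem i j σL σR l m h]
  by_cases h0 : m = 0
  · subst h0; simp
  · rw [if_neg h0]
    by_cases hm : m ≤ 2*k - 4 + 2
    · rw [dif_pos hm, rk_midVerts _ _ _ _ _ (by rw [midVerts_length]; omega)]
      omega
    · rw [dif_neg hm]
      simp only [rk_xDup]
      omega

/-- The standard long path is a directed path of length `2k-1`. -/
theorem stdList_isDirPath (hk : 2 ≤ k) (i : L) (j : R) (hij : (i, j) ∈ Eproj)
    (l : Fin (numDup Sg k K)) (σL : Sg) :
    IsDirPath (Edges Eproj π σ0 k K) (SpV.cDup i l) (SpV.xDup j l)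
      (pathEdges (SpV.cDup i l :: midVerts k K i j σL (π i j σL) ++ [SpV.xDup j l])) ∧
    (pathEdges (SpV.cDup i l :: midVerts k K i j σL (π i j σL) ++
      [SpV.xDup j l])).length ≤ 2*k - 1 := by
  set σR := π i j σL with hσR
  set vs : List (Vt L R Sg k K) :=
    SpV.cDup i l :: midVerts k K i j σL σR ++ [SpV.xDup j l] with hvs
  have hvslen : vs.length = 2*k - 4 + 4 := stdList_length i j σL σR l
  have hplen : (pathEdges vs).length = 2*k - 4 + 3 := by
    rw [pathEdges_length, hvslen]
    omega
  have hpe_ne : pathEdges vs ≠ [] := by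
    intro hcon
    have h2 := congrArg List.length hcon
    rw [hplen] at h2
    simp only [List.length_nil] at h2
    omega
  refine ⟨⟨hpe_ne, ?_, ?_, ?_, chain'_pathEdges vs, ?_⟩, by omega⟩
  · -- all edges belong to the edge set
    intro e he
    rw [mem_pathEdges_iff] at he
    obtain ⟨m, hm, rfl⟩ := he
    have hm' := hm
    rw [hvslen] at hm'
    apply mem_Edges_iff.mpr
    have hL := stdList_getElem (k := k) (K := K) i j σL σR l m (by omega)
    have hR := stdList_getElem (k := k) (K := K) i j σL σR l (m+1) (by omega)
    rcases Nat.eq_zero_or_pos m with h0 | h0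
    · -- first edge: (cDup, cLab)
      subst h0
      left
      refine ⟨i, l, σL, ?_⟩
      rw [if_pos rfl] at hL
      rw [if_neg (by omega), dif_pos (by omega)] at hR
      have hmv : (midVerts k K i j σL σR)[0 + 1 - 1]'(by rw [midVerts_length]; omega)
          = SpV.cLab i σL := by
        rw [midVerts_getElem _ _ _ _ _ (by rw [midVerts_length]; omega), dif_pos rfl]
      rw [hmv] at hR
      rw [Prod.mk.injEq]
      exact ⟨hL, hR⟩
    · by_cases hmid : m + 1 ≤ 2*k - 4 + 2
      · -- middle edge: consecutive in midVerts
        right; right; left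
        refine ⟨i, j, σL, m - 1, by rw [midVerts_length]; omega, hij, ?_⟩
        rw [if_neg (by omega), dif_pos (by omega)] at hL
        rw [if_neg (by omega), dif_pos (by omega)] at hR
        rw [Prod.mk.injEq]
        refine ⟨hL, ?_⟩
        rw [hR]
        simp only [show m - 1 + 1 = m + 1 - 1 from by omega]
        rfl
      · -- last edge: (xLab, xDup)
        right; right; right; right; left
        refine ⟨j, l, σR, ?_⟩
        rw [if_neg (by omega), dif_pos (by omega)] at hL
        rw [if_neg (by omega), dif_neg (by omega)] at hR
        have hmv : (midVerts k K i j σL σR)[m - 1]'(by rw [midVerts_length]; omega)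
            = SpV.xLab j σR := by
          rw [midVerts_getElem _ _ _ _ _ (by rw [midVerts_length]; omega),
            dif_neg (by omega), dif_neg (by omega)]
        rw [hmv] at hL
        rw [Prod.mk.injEq]
        exact ⟨hL, hR⟩
  · -- head
    rw [List.head?_eq_getElem?, List.getElem?_eq_getElem (by omega)]
    rw [pathEdges_getElem vs 0 (by omega)]
    have h0 := stdList_getElem (k := k) (K := K) i j σL σR l 0 (by omega)
    rw [if_pos rfl] at h0
    exact congrArg some h0
  · -- last
    rw [List.getLast?_eq_getElem?, List.getElem?_eq_getElem (by omega)]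
    rw [pathEdges_getElem vs ((pathEdges vs).length - 1) (by omega)]
    simp only [Option.map_some]
    congr 1
    have hlast := stdList_getElem (k := k) (K := K) i j σL σR l (2*k - 4 + 3) (by omega)
    rw [if_neg (by omega), dif_neg (by omega)] at hlast
    simp only [hplen, show 2*k - 4 + 3 - 1 + 1 = 2*k - 4 + 3 from by omega]
    exact hlast
  · -- nodup
    have hmap : (SpV.cDup i l : Vt L R Sg k K) :: (pathEdges vs).map Prod.snd = vs := by
      rw [map_snd_pathEdges]
      rfl
    rw [hmap]
    rw [List.nodup_iff_injective_get]
    rintro ⟨m, hm⟩ ⟨m', hm'⟩ hEq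
    simp only [List.get_eq_getElem] at hEq
    have hrk := congrArg rk hEq
    rw [rk_stdList i j σL σR l m (by omega), rk_stdList i j σL σR l m' (by omega)] at hrk
    rw [hvslen] at hm hm'
    simp only [Fin.mk.injEq]
    omega

end StdList

end Spanner

open Spanner

/-- Claim `path`.  In the directed spanner instance `G = (V,E)` built (with
parameters `k ≥ 2`, `K ≥ 1`) from a projection games instance in which every left vertex has
degree exactly `K`, for every `{c_i, x_j} ∈ E_Proj` and `l ∈ [kK|Σ|]`, the directed paths from
`c_i^l` to `x_j^l` with at most `2k−1` edges are exactly: (a) the single outer edge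
`(c_i^l, x_j^l)`, and (b) for each `(σL, σR) ∈ π_{i,j}` the `(2k−1)`-edge path consisting of
`(c_i^l, c_{i,σL})`, the middle path `E_M^{i,j,σL,σR}`, and `(x_{j,σR}, x_j^l)`. -/
theorem directed_spanner_path_characterization
    {L R Sg : Type} [Fintype L] [Fintype R] [Fintype Sg]
    [DecidableEq L] [DecidableEq R] [DecidableEq Sg]
    (Eproj : Finset (L × R)) (π : L → R → Sg → Sg) (σ0 : Sg) (k K : ℕ)
    (hk : 2 ≤ k) (hK : 1 ≤ K)
    (hdeg : ∀ i : L, (Eproj.filter fun e => e.1 = i).card = K) :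
    ∀ (i : L) (j : R), (i, j) ∈ Eproj → ∀ l : Fin (Spanner.numDup Sg k K),
      ∀ p : List (Spanner.Vt L R Sg k K × Spanner.Vt L R Sg k K),
        (IsDirPath (Spanner.Edges Eproj π σ0 k K) (SpV.cDup i l) (SpV.xDup j l) p ∧
            p.length ≤ 2 * k - 1) ↔
          (p = [(SpV.cDup i l, SpV.xDup j l)] ∨
            ∃ σL : Sg, p = Spanner.pathEdges
              (SpV.cDup i l :: Spanner.midVerts k K i j σL (π i j σL) ++ [SpV.xDup j l])) := by
  intro i j hij l p
  constructor
  · rintro ⟨hp, hlen⟩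
    -- Forward direction
    have hplen0 : 0 < p.length := List.length_pos_iff.mpr hp.1
    have hpe := dirPath_eq_pathEdges hp
    set vs : List (Vt L R Sg k K) := SpV.cDup i l :: p.map Prod.snd with hvs
    have hN : vs.length = p.length + 1 := by simp [hvs]
    set w : ℕ → Vt L R Sg k K := fun m => vs.getD m (SpV.cDup i l) with hwdef
    have hwE : ∀ m, ∀ h : m < vs.length, w m = vs[m] :=
      fun m h => List.getD_eq_getElem vs _ h
    have hw0 : w 0 = SpV.cDup i l := rfl
    have hE' : ∀ e ∈ pathEdges vs, e ∈ Edges Eproj π σ0 k K := by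
      rw [← hpe]; exact hp.2.1
    have hadj : ∀ m, m + 1 < vs.length →
        (w m, w (m+1)) ∈ Edges Eproj π σ0 k K := by
      intro m hm
      apply hE'
      rw [mem_pathEdges_iff]
      refine ⟨m, hm, ?_⟩
      rw [hwE m (by omega), hwE (m+1) hm]
    have hwlast : w p.length = SpV.xDup j l := by
      have hlast := dirPath_last hp
      obtain ⟨q, hq⟩ : ∃ q, p.length = q + 1 := ⟨p.length - 1, by omega⟩
      have e1 : (p[p.length - 1]'(by omega)) = p[q]'(by omega) :=
        getElem_idx_congr p (by omega) (by omega)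
      have hlast' : (p[q]'(by omega)).2 = SpV.xDup j l :=
        (congrArg Prod.snd e1).symm.trans hlast
      rw [hq]
      calc w (q+1) = vs[q+1]'(by rw [hN]; omega) := hwE (q+1) (by rw [hN]; omega)
        _ = (SpV.cDup i l :: p.map Prod.snd)[q+1]'(by simp; omega) :=
          List.getElem_of_eq hvs _
        _ = (p.map Prod.snd)[q]'(by simp; omega) := List.getElem_cons_succ _ _ _ _
        _ = (p[q]'(by omega)).2 := by rw [List.getElem_map]
        _ = SpV.xDup j l := hlast'
    rcases mem_Edges_iff.mp (hadj 0 (by omega)) with ⟨a, b, c, heq⟩ |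
        ⟨a, c, hc, (heq | heq)⟩ | ⟨a, b, c, m1, h1, hab, heq⟩ |
        ⟨b, c, hc, (heq | heq)⟩ | ⟨b, c, d, heq⟩ | ⟨a, b, c, hab, heq⟩
    · -- first edge is (cDup i l, cLab i σL): the long path case
      rw [Prod.mk.injEq] at heq
      obtain ⟨ha, hb⟩ := heq
      rw [hw0] at ha
      simp only [SpV.cDup, Sum.inr.injEq, Sum.inl.injEq, Prod.mk.injEq] at ha
      obtain ⟨rfl, rfl⟩ := (show i = a ∧ l = b from ⟨ha.1, ha.2⟩)
      set σL := c with hσL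
      have hw1 : w 1 = SpV.cLab i σL := hb
      -- rank bookkeeping
      have hstep : ∀ m, 1 ≤ m → m + 1 < vs.length → rk (w m) ≤ rk (w (m+1)) + 1 := by
        intro m h1m h2m
        obtain ⟨q, rfl⟩ : ∃ q, m = q + 1 := ⟨m - 1, by omega⟩
        have htgt := rk_tgt_le (Eproj := Eproj) (π := π) (σ0 := σ0)
          (hadj q (by omega))
        exact rk_step (hadj (q+1) h2m) htgt
      have tele : ∀ b', b' < vs.length → ∀ a', 1 ≤ a' → a' ≤ b' →
          rk (w a') ≤ rk (w b') + (b' - a') := by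
        intro b'
        induction b' with
        | zero => intro _ a' h1 h2; omega
        | succ b' ih =>
          intro hb' a' h1 h2
          rcases Nat.lt_or_ge a' (b'+1) with hab' | hab'
          · have hih := ih (by omega) a' h1 (by omega)
            have h3 := hstep b' (by omega) hb'
            omega
          · have : a' = b' + 1 := by omega
            subst this
            omega
      have hrkw1 : rk (w 1) = 2*k - 4 + 2 := by rw [hw1]; simp
      have hNval : p.length = 2*k - 1 := by
        have hm := tele p.length (by omega) 1 le_rfl (by omega)
        rw [hrkw1, hwlast] at hm
        simp only [rk_xDup] at hm
        omega
      have hexact : ∀ m, 1 ≤ m → m < vs.length → rk (w m) = p.length - m := by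
        intro m h1m h2m
        have hup := tele m (by omega) 1 le_rfl (by omega)
        have hdown := tele p.length (by omega) m h1m (by omega)
        rw [hrkw1] at hup
        rw [hwlast] at hdown
        simp only [rk_xDup] at hdown
        omega
      -- second edge must enter a middle path
      rcases mem_Edges_iff.mp (hadj 1 (by omega)) with ⟨a2, b2, c2, heq2⟩ |
          ⟨a2, c2, hc2, (heq2 | heq2)⟩ | ⟨a2, b2, c2, m2, h2, hab2, heq2⟩ |
          ⟨b2, c2, hc2, (heq2 | heq2)⟩ | ⟨b2, c2, d2, heq2⟩ | ⟨a2, b2, c2, hab2, heq2⟩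
      · exfalso
        rw [Prod.mk.injEq] at heq2
        have := hb.symm.trans heq2.1
        simp [SpV.cLab, SpV.cDup] at this
      · exfalso
        rw [Prod.mk.injEq] at heq2
        have hr := hexact 2 (by omega) (by omega)
        have h22 : w 2 = SpV.cLab a2 c2 := heq2.2
        rw [h22] at hr
        simp only [rk_cLab] at hr
        omega
      · exfalso
        rw [Prod.mk.injEq] at heq2
        have hr := hexact 2 (by omega) (by omega)
        have h22 : w 2 = SpV.cLab a2 σ0 := heq2.2
        rw [h22] at hr
        simp only [rk_cLab] at hr
        omega
      · -- the EM case: extract j' := b2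
        rw [Prod.mk.injEq] at heq2
        obtain ⟨ha2, hb2⟩ := heq2
        have hcl : (midVerts k K a2 b2 c2 (π a2 b2 c2))[m2]'(Nat.lt_of_succ_lt h2)
            = SpV.cLab i σL := ha2.symm.trans hw1
        obtain ⟨hm20, rfl, rfl⟩ := midVerts_eq_cLab h2 hcl
        subst hm20
        -- the inductive claim along the middle path
        have hclaim : ∀ m, m ≤ 2*k - 3 →
            ∀ hm : m < (midVerts (L := L) (R := R) k K i b2 σL (π i b2 σL)).length,
            w (m+1) = (midVerts k K i b2 σL (π i b2 σL))[m] := by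
          intro m
          induction m with
          | zero =>
            intro _ hm
            rw [midVerts_getElem _ _ _ _ _ hm, dif_pos rfl]
            exact hb
          | succ m ih =>
            intro hle hm
            rcases Nat.eq_zero_or_pos m with rfl | hmpos
            · exact hb2
            · have hprev := ih (by omega) (by rw [midVerts_length]; omega)
              have hmidm : (midVerts k K i b2 σL (π i b2 σL))[m]'(by
                  rw [midVerts_length]; omega) =
                  SpV.mid i b2 σL (π i b2 σL) ⟨m - 1, by
                    rw [midVerts_length] at hm; omega⟩ := by
                rw [midVerts_getElem _ _ _ _ _ (by rw [midVerts_length]; omega),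
                  dif_neg (by omega), dif_pos (by rw [midVerts_length] at hm; omega)]
              have hwm : w (m+1) = SpV.mid i b2 σL (π i b2 σL) ⟨m - 1, by
                  rw [midVerts_length] at hm; omega⟩ := hprev.trans hmidm
              have hmlen := hm
              rw [midVerts_length] at hmlen
              rcases mem_Edges_iff.mp (hadj (m+1) (by omega)) with ⟨a3, b3, c3, heq3⟩ |
                  ⟨a3, c3, hc3, (heq3 | heq3)⟩ | ⟨a3, b3, c3, m3, h3, hab3, heq3⟩ |
                  ⟨b3, c3, hc3, (heq3 | heq3)⟩ | ⟨b3, c3, d3, heq3⟩ |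
                  ⟨a3, b3, c3, hab3, heq3⟩
              · exfalso
                rw [Prod.mk.injEq] at heq3
                have := hwm.symm.trans heq3.1
                simp [SpV.mid, SpV.cDup] at this
              · exfalso
                rw [Prod.mk.injEq] at heq3
                have := hwm.symm.trans heq3.1
                simp [SpV.mid, SpV.cLab] at this
              · exfalso
                rw [Prod.mk.injEq] at heq3
                have := hwm.symm.trans heq3.1
                simp [SpV.mid, SpV.cLab] at this
              · rw [Prod.mk.injEq] at heq3
                obtain ⟨ha3, hb3⟩ := heq3
                have hmm : (midVerts k K a3 b3 c3 (π a3 b3 c3))[m3]'(Nat.lt_of_succ_lt h3)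
                    = SpV.mid i b2 σL (π i b2 σL) ⟨m - 1, by omega⟩ :=
                  ha3.symm.trans hwm
                obtain ⟨hm3eq, h_i, h_j, h_s, h_sr⟩ :=
                  midVerts_eq_mid (Nat.lt_of_succ_lt h3) hmm
                subst h_i
                subst h_j
                subst h_s
                have hm3 : m3 = m - 1 + 1 := hm3eq
                exact hb3.trans (getElem_idx_congr _ (by omega) (by omega))
              · exfalso
                rw [Prod.mk.injEq] at heq3
                have := hwm.symm.trans heq3.1
                simp [SpV.mid, SpV.xLab] at this
              · exfalso
                rw [Prod.mk.injEq] at heq3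
                have := hwm.symm.trans heq3.1
                simp [SpV.mid, SpV.xLab] at this
              · exfalso
                rw [Prod.mk.injEq] at heq3
                have := hwm.symm.trans heq3.1
                simp [SpV.mid, SpV.xLab] at this
              · exfalso
                rw [Prod.mk.injEq] at heq3
                have := hwm.symm.trans heq3.1
                simp [SpV.mid, SpV.cDup] at this
        -- end vertex of the middle path
        have hwx : w (2*k - 2) = SpV.xLab b2 (π i b2 σL) := by
          have hc := hclaim (2*k - 3) le_rfl (by rw [midVerts_length]; omega)
          have hmvx : (midVerts k K i b2 σL (π i b2 σL))[2*k - 3]'(by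
              rw [midVerts_length]; omega) = SpV.xLab b2 (π i b2 σL) := by
            rw [midVerts_getElem _ _ _ _ _ (by rw [midVerts_length]; omega),
              dif_neg (by omega), dif_neg (by omega)]
          exact (congrArg w (show 2*k - 3 + 1 = 2*k - 2 from by omega)).symm.trans
            (hc.trans hmvx)
        -- the last edge forces j' = j
        have hwlast' : w (2*k - 2 + 1) = SpV.xDup j l := by
          have h1 : 2*k - 2 + 1 = p.length := by omega
          rw [h1]
          exact hwlast
        have hb2j : b2 = j := by
          rcases mem_Edges_iff.mp (hadj (2*k - 2) (by omega)) with ⟨a4, b4, c4, heq4⟩ |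
              ⟨a4, c4, hc4, (heq4 | heq4)⟩ | ⟨a4, b4, c4, m4, h4, hab4, heq4⟩ |
              ⟨b4, c4, hc4, (heq4 | heq4)⟩ | ⟨b4, c4, d4, heq4⟩ |
              ⟨a4, b4, c4, hab4, heq4⟩
          · exfalso
            rw [Prod.mk.injEq] at heq4
            have := hwx.symm.trans heq4.1
            simp [SpV.xLab, SpV.cDup] at this
          · exfalso
            rw [Prod.mk.injEq] at heq4
            have := hwx.symm.trans heq4.1
            simp [SpV.xLab, SpV.cLab] at this
          · exfalso
            rw [Prod.mk.injEq] at heq4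
            have := hwx.symm.trans heq4.1
            simp [SpV.xLab, SpV.cLab] at this
          · exfalso
            rw [Prod.mk.injEq] at heq4
            have hr := congrArg rk (hwlast'.symm.trans heq4.2)
            rw [rk_midVerts _ _ _ _ _ h4] at hr
            have h4' := h4
            rw [midVerts_length] at h4'
            simp only [rk_xDup] at hr
            omega
          · exfalso
            rw [Prod.mk.injEq] at heq4
            have := hwlast'.symm.trans heq4.2
            simp [SpV.xDup, SpV.xLab] at this
          · exfalso
            rw [Prod.mk.injEq] at heq4
            have := hwlast'.symm.trans heq4.2
            simp [SpV.xDup, SpV.xLab] at this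
          · rw [Prod.mk.injEq] at heq4
            have h1' := hwx.symm.trans heq4.1
            have h2' := hwlast'.symm.trans heq4.2
            simp only [SpV.xLab, Sum.inr.injEq, Sum.inl.injEq, Prod.mk.injEq] at h1'
            simp only [SpV.xDup, Sum.inr.injEq, Sum.inl.injEq, Prod.mk.injEq] at h2'
            rw [h1'.1, ← h2'.1]
          · exfalso
            rw [Prod.mk.injEq] at heq4
            have := hwx.symm.trans heq4.1
            simp [SpV.xLab, SpV.cDup] at this
        subst hb2j
        -- conclude: the path equals the standard long path
        right
        refine ⟨σL, ?_⟩
        have hvseq : vs = SpV.cDup i l :: midVerts k K i b2 σL (π i b2 σL) ++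
            [SpV.xDup b2 l] := by
          apply List.ext_getElem
          · rw [hN, hNval, stdList_length]
            omega
          · intro n hn1 hn2
            rw [← hwE n hn1]
            rw [stdList_getElem i b2 σL (π i b2 σL) l n
              (by rw [hN, hNval] at hn1; omega)]
            by_cases hn0 : n = 0
            · subst hn0
              rw [if_pos rfl]
              exact hw0
            · rw [if_neg hn0]
              rw [hN, hNval] at hn1
              by_cases hnm : n ≤ 2*k - 4 + 2
              · rw [dif_pos hnm]
                have hc := hclaim (n - 1) (by omega) (by rw [midVerts_length]; omega)
                exact (congrArg w (show n - 1 + 1 = n from by omega)).symm.trans hc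
              · rw [dif_neg hnm]
                have h1 : n = p.length := by omega
                rw [h1]
                exact hwlast
        rw [hpe, hvseq]
      · exfalso
        rw [Prod.mk.injEq] at heq2
        have := hw1.symm.trans heq2.1
        simp [SpV.cLab, SpV.xLab] at this
      · exfalso
        rw [Prod.mk.injEq] at heq2
        have := hw1.symm.trans heq2.1
        simp [SpV.cLab, SpV.xLab] at this
      · exfalso
        rw [Prod.mk.injEq] at heq2
        have := hw1.symm.trans heq2.1
        simp [SpV.cLab, SpV.xLab] at this
      · exfalso
        rw [Prod.mk.injEq] at heq2
        have := hw1.symm.trans heq2.1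
        simp [SpV.cLab, SpV.cDup] at this
    · exfalso
      rw [Prod.mk.injEq] at heq
      have := hw0.symm.trans heq.1
      simp [SpV.cDup, SpV.cLab] at this
    · exfalso
      rw [Prod.mk.injEq] at heq
      have := hw0.symm.trans heq.1
      simp [SpV.cDup, SpV.cLab] at this
    · exfalso
      rw [Prod.mk.injEq] at heq
      have hr := congrArg rk (hw0.symm.trans heq.1)
      rw [rk_midVerts _ _ _ _ _ (Nat.lt_of_succ_lt h1)] at hr
      have h1' := h1
      rw [midVerts_length] at h1'
      simp only [rk_cDup] at hr
      omega
    · exfalso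
      rw [Prod.mk.injEq] at heq
      have := hw0.symm.trans heq.1
      simp [SpV.cDup, SpV.xLab] at this
    · exfalso
      rw [Prod.mk.injEq] at heq
      have := hw0.symm.trans heq.1
      simp [SpV.cDup, SpV.xLab] at this
    · exfalso
      rw [Prod.mk.injEq] at heq
      have := hw0.symm.trans heq.1
      simp [SpV.cDup, SpV.xLab] at this
    · -- first edge is an outer edge: the short path case
      rw [Prod.mk.injEq] at heq
      obtain ⟨ha, hb⟩ := heq
      rw [hw0] at ha
      simp only [SpV.cDup, Sum.inr.injEq, Sum.inl.injEq, Prod.mk.injEq] at ha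
      obtain ⟨rfl, rfl⟩ := (show i = a ∧ l = c from ⟨ha.1, ha.2⟩)
      have hplen1 : p.length = 1 := by
        by_contra hcon
        have h2 : 2 < vs.length := by rw [hN]; omega
        have hsrc := rk_src_pos (Eproj := Eproj) (π := π) (σ0 := σ0)
          (hadj 1 (by omega))
        rw [show ((w 1, w 2) : _ × _).1 = w 1 from rfl, hb] at hsrc
        simp at hsrc
      have hb2 : b = j := by
        have := hwlast
        rw [hplen1] at this
        have h2 := hb.symm.trans this
        simp only [SpV.xDup, Sum.inr.injEq, Sum.inl.injEq, Prod.mk.injEq] at h2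
        exact h2.1
      subst hb2
      left
      apply List.ext_getElem
      · simp [hplen1]
      · intro n hn1 hn2
        have hn0 : n = 0 := by rw [hplen1] at hn1; omega
        subst hn0
        have hp0 : p[0] = (w 0, w 1) := by
          rw [List.getElem_of_eq hpe hn1,
            pathEdges_getElem vs 0 (by rw [pathEdges_length, hN]; omega)]
          rw [← hwE 0 (by omega), ← hwE 1 (by rw [hN]; omega)]
        rw [hp0, hw0, hb]
        simp
  · -- Reverse direction
    rintro (rfl | ⟨σL, rfl⟩)
    · -- the single outer edge
      refine ⟨⟨by simp, ?_, by simp, by simp, by exact List.isChain_singleton _, ?_⟩, by simp; omega⟩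
      · intro e he
        simp only [List.mem_singleton] at he
        subst he
        exact mem_Edges_iff.mpr (Or.inr (Or.inr (Or.inr (Or.inr (Or.inr
          ⟨i, j, l, hij, rfl⟩)))))
      · simp [SpV.cDup, SpV.xDup]
    · exact stdList_isDirPath hk i j hij l σL
end
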